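/- arXiv:math/0608665 — 7 statements merged into one kernel-verified Lean document; each statement's English description precedes it below -/
import Mathlib

section
/- There exists an absolute constant c > 0 such that for every 0 < ε ≤ 1/2 and every 1 ≤ m ≤ n there is a set Λ ⊂ B₂ⁿ which is an ε-cover of Ũ_m with respect to the Euclidean metric, satisfies Ũ_m ⊂ 2 conv Λ, and has cardinality |Λ| ≤ exp(c m log(c n/(m ε))). -/
open Metric Set
open scoped Pointwise

section Aux

open MeasureTheory Filter
open scoped ENNReal Topology

noncomputable section AuxCover

/-- Extension-by-zero isometric embedding of `ℝ^m` into `ℝ^n` along a subset `S` of size `m`. -/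
noncomputable def embedIso {n m : ℕ} (S : Finset (Fin n)) (hS : S.card = m) :
    EuclideanSpace ℝ (Fin m) →ₗᵢ[ℝ] EuclideanSpace ℝ (Fin n) where
  toLinearMap :=
  { toFun := fun x => (WithLp.toLp 2 (fun i => if h : i ∈ S then x (S.equivFinOfCardEq hS ⟨i, h⟩) else 0) :
      EuclideanSpace ℝ (Fin n))
    map_add' := fun x y => by
      ext i
      by_cases h : i ∈ S <;> simp [h, PiLp.add_apply]
    map_smul' := fun c x => by
      ext i
      by_cases h : i ∈ S <;> simp [h, PiLp.smul_apply] }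
  norm_map' := fun x => by
    simp only [LinearMap.coe_mk, AddHom.coe_mk]
    rw [EuclideanSpace.norm_eq, EuclideanSpace.norm_eq]
    congr 1
    have h1 : ∑ i : Fin n,
        ‖(if h : i ∈ S then x (S.equivFinOfCardEq hS ⟨i, h⟩) else 0)‖ ^ 2
        = ∑ i ∈ S, ‖(if h : i ∈ S then x (S.equivFinOfCardEq hS ⟨i, h⟩) else 0)‖ ^ 2 := by
      refine (Finset.sum_subset (Finset.subset_univ S) ?_).symm
      intro i _ hi
      simp [hi]
    have h2 : ∑ i ∈ S, ‖(if h : i ∈ S then x (S.equivFinOfCardEq hS ⟨i, h⟩) else 0)‖ ^ 2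
        = ∑ a ∈ S.attach, ‖x (S.equivFinOfCardEq hS a)‖ ^ 2 := by
      rw [← Finset.sum_attach S fun i => ‖(if h : i ∈ S then x (S.equivFinOfCardEq hS ⟨i, h⟩) else 0)‖ ^ 2]
      refine Finset.sum_congr rfl fun a _ => ?_
      rw [dif_pos a.2]
    have h3 : ∑ a ∈ S.attach, ‖x (S.equivFinOfCardEq hS a)‖ ^ 2
        = ∑ k : Fin m, ‖x k‖ ^ 2 := by
      rw [show S.attach = (Finset.univ : Finset {i // i ∈ S}) from rfl]
      exact Equiv.sum_comp (S.equivFinOfCardEq hS) fun k => ‖x k‖ ^ 2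
    simp only [PiLp.toLp_apply, h1, h2, h3]

lemma embedIso_apply_not_mem {n m : ℕ} (S : Finset (Fin n)) (hS : S.card = m)
    (x : EuclideanSpace ℝ (Fin m)) {i : Fin n} (hi : i ∉ S) : embedIso S hS x i = 0 := by
  simp [embedIso, hi]

lemma embedIso_surj {n m : ℕ} (S : Finset (Fin n)) (hS : S.card = m)
    (v : EuclideanSpace ℝ (Fin n)) (hv : ∀ i, i ∉ S → v i = 0) :
    ∃ x : EuclideanSpace ℝ (Fin m), embedIso S hS x = v := by
  refine ⟨(WithLp.toLp 2 (fun k => v ((S.equivFinOfCardEq hS).symm k)) : EuclideanSpace ℝ (Fin m)), ?_⟩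
  ext i
  by_cases h : i ∈ S
  · simp only [embedIso, LinearIsometry.coe_mk, LinearMap.coe_mk, AddHom.coe_mk, PiLp.toLp_apply, dif_pos h]
    rw [Equiv.symm_apply_apply]
  · simp [embedIso, h, hv i h]

end AuxCover


/-- A finite `ε`-net of the unit ball of `ℝ^m` of cardinality at most `(1 + 2/ε)^m`. -/
lemma exists_net (m : ℕ) {ε : ℝ} (hε : 0 < ε) :
    ∃ N : Set (EuclideanSpace ℝ (Fin m)), N ⊆ closedBall 0 1 ∧
      (∀ x ∈ closedBall (0 : EuclideanSpace ℝ (Fin m)) 1, ∃ y ∈ N, dist x y ≤ ε) ∧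
      N.Finite ∧ (N.ncard : ℝ) ≤ (1 + 2 / ε) ^ m := by
  rcases Nat.eq_zero_or_pos m with hm | hm
  · subst hm
    refine ⟨{0}, by simp, fun x _ => ⟨0, rfl, ?_⟩, finite_singleton _, by simp⟩
    · have : x = 0 := Subsingleton.elim x 0
      simp [this, hε.le]
  -- m ≥ 1
  haveI : Nontrivial (EuclideanSpace ℝ (Fin m)) :=
    Module.nontrivial_of_finrank_pos (R := ℝ) (by rw [finrank_euclideanSpace_fin]; exact hm)
  -- Zorn: maximal ε-separated subset of the ball
  set Sep : Set (Set (EuclideanSpace ℝ (Fin m))) :=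
    {A | A ⊆ closedBall 0 1 ∧ A.Pairwise fun y z => ε < dist y z} with hSep
  obtain ⟨N, hNmax⟩ : ∃ N, Maximal (· ∈ Sep) N := by
    apply zorn_subset
    intro c hc hchain
    refine ⟨⋃₀ c, ⟨?_, ?_⟩, fun s hs => subset_sUnion_of_mem hs⟩
    · exact sUnion_subset fun A hA => (hc hA).1
    · intro y hy z hz hyz
      obtain ⟨A, hA, hyA⟩ := hy
      obtain ⟨B, hB, hzB⟩ := hz
      rcases hchain.total hA hB with h | h
      · exact (hc hB).2 (h hyA) hzB hyz
      · exact (hc hA).2 hyA (h hzB) hyz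
  have hNsub : N ⊆ closedBall 0 1 := hNmax.1.1
  have hNsep : N.Pairwise fun y z => ε < dist y z := hNmax.1.2
  have hnet : ∀ x ∈ closedBall (0 : EuclideanSpace ℝ (Fin m)) 1, ∃ y ∈ N, dist x y ≤ ε := by
    intro x hx
    by_contra hcon
    push_neg at hcon
    have hxN : x ∉ N := by
      intro hxN
      have : ε < 0 := by simpa using hcon x hxN
      linarith
    have hins : insert x N ∈ Sep := by
      constructor
      · exact insert_subset hx hNsub
      · intro y hy z hz hyz
        rcases hy with rfl | hy
        · rcases hz with rfl | hz
          · exact absurd rfl hyz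
          · exact hcon z hz
        · rcases hz with rfl | hz
          · rw [dist_comm]; exact hcon y hy
          · exact hNsep hy hz hyz
    exact hxN (hNmax.2 hins (subset_insert x N) (mem_insert x N))
  -- cardinality bound for any finite subset via volumes
  have key : ∀ F : Finset (EuclideanSpace ℝ (Fin m)), ↑F ⊆ N → (F.card : ℝ) ≤ (1 + 2 / ε) ^ m := by
    intro F hF
    have hdisj : (↑F : Set (EuclideanSpace ℝ (Fin m))).PairwiseDisjoint
        fun y => ball y (ε / 2) := by
      intro y hy z hz hyz
      refine Set.disjoint_left.2 fun w hw hw' => ?_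
      have : dist y z < ε := by
        calc dist y z ≤ dist y w + dist w z := dist_triangle _ _ _
        _ < ε / 2 + ε / 2 := by
            rw [dist_comm y w]
            exact add_lt_add (mem_ball.1 hw) (mem_ball.1 hw')
        _ = ε := by ring
      exact absurd this (not_lt.2 (hNsep (hF hy) (hF hz) hyz).le)
    have hsub : ∀ y ∈ F, ball y (ε / 2) ⊆ ball (0 : EuclideanSpace ℝ (Fin m)) (1 + ε / 2) := by
      intro y hy w hw
      have h1 : dist y (0 : EuclideanSpace ℝ (Fin m)) ≤ 1 := mem_closedBall.1 (hNsub (hF hy))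
      have := mem_ball.1 hw
      exact mem_ball.2 (lt_of_le_of_lt (dist_triangle w y 0) (by linarith [this]))
    have hvol : ∑ y ∈ F, volume (ball y (ε / 2)) ≤ volume (ball (0 : EuclideanSpace ℝ (Fin m)) (1 + ε / 2)) := by
      rw [← measure_biUnion_finset hdisj fun y _ => measurableSet_ball]
      exact measure_mono (Set.iUnion₂_subset hsub)
    have hbm : ∀ y : EuclideanSpace ℝ (Fin m), volume (ball y (ε / 2)) =
        ENNReal.ofReal ((ε / 2) ^ m) * volume (ball (0 : EuclideanSpace ℝ (Fin m)) 1) := by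
      intro y
      rw [Measure.addHaar_ball volume y (by positivity : (0:ℝ) ≤ ε / 2), finrank_euclideanSpace_fin]
    have hbig : volume (ball (0 : EuclideanSpace ℝ (Fin m)) (1 + ε / 2)) =
        ENNReal.ofReal ((1 + ε / 2) ^ m) * volume (ball (0 : EuclideanSpace ℝ (Fin m)) 1) := by
      rw [Measure.addHaar_ball volume _ (by positivity : (0:ℝ) ≤ 1 + ε / 2), finrank_euclideanSpace_fin]
    set V := volume (ball (0 : EuclideanSpace ℝ (Fin m)) 1) with hV
    have hVpos : 0 < V := measure_ball_pos volume 0 one_pos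
    have hVlt : V < ⊤ := measure_ball_lt_top
    rw [Finset.sum_congr rfl fun y _ => hbm y, Finset.sum_const, nsmul_eq_mul, hbig] at hvol
    have hcard : (F.card : ℝ≥0∞) * ENNReal.ofReal ((ε / 2) ^ m) ≤ ENNReal.ofReal ((1 + ε / 2) ^ m) := by
      exact (ENNReal.mul_le_mul_iff_left hVpos.ne' hVlt.ne).1 (by rwa [← mul_assoc] at hvol)
    have hreal : (F.card : ℝ) * (ε / 2) ^ m ≤ (1 + ε / 2) ^ m := by
      have h1 : ((F.card : ℝ≥0∞) * ENNReal.ofReal ((ε / 2) ^ m)) =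
          ENNReal.ofReal ((F.card : ℝ) * (ε / 2) ^ m) := by
        rw [ENNReal.ofReal_mul (by positivity), ENNReal.ofReal_natCast]
      rw [h1] at hcard
      exact (ENNReal.ofReal_le_ofReal_iff (by positivity)).1 hcard
    have hpow : (0:ℝ) < (ε / 2) ^ m := by positivity
    rw [← le_div_iff₀ hpow] at hreal
    have hb : (1 + ε / 2) / (ε / 2) = 1 + 2 / ε := by
      field_simp
      ring
    calc (F.card : ℝ) ≤ (1 + ε / 2) ^ m / (ε / 2) ^ m := hreal
      _ = ((1 + ε / 2) / (ε / 2)) ^ m := (div_pow _ _ _).symm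
      _ = (1 + 2 / ε) ^ m := by rw [hb]
  -- conclude finiteness and cardinality
  have hfin : N.Finite := by
    by_contra hinf
    obtain ⟨F, hFsub, hFcard⟩ := Set.Infinite.exists_subset_card_eq hinf
      (⌊(1 + 2 / ε) ^ m⌋₊ + 1)
    have := key F hFsub
    rw [hFcard] at this
    have h2 : ((1:ℝ) + 2 / ε) ^ m < (⌊(1 + 2 / ε) ^ m⌋₊ + 1 : ℕ) := by
      push_cast
      exact Nat.lt_floor_add_one _
    linarith
  refine ⟨N, hNsub, hnet, hfin, ?_⟩
  have := key hfin.toFinset (by simp)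
  rwa [Set.ncard_eq_toFinset_card N hfin]


/-- An `ε`-net (with `ε ≤ 1/2`, containing `0`) of the unit ball 2-absorbs the unit ball. -/
lemma net_absorb {E : Type*} [NormedAddCommGroup E] [NormedSpace ℝ E]
    {N : Set E} (hN0 : (0:E) ∈ N) (hfin : N.Finite)
    {ε : ℝ} (hε : 0 < ε) (hε2 : ε ≤ 1/2)
    (hnet : ∀ x ∈ closedBall (0:E) 1, ∃ y ∈ N, dist x y ≤ ε) :
    closedBall (0:E) 1 ⊆ (2:ℝ) • convexHull ℝ N := by
  intro x hx
  have hnet' : ∀ z : E, ∃ y, y ∈ N ∧ (‖z‖ ≤ 1 → dist z y ≤ ε) := by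
    intro z
    by_cases h : ‖z‖ ≤ 1
    · obtain ⟨y, hy, hd⟩ := hnet z (mem_closedBall_zero_iff.2 h)
      exact ⟨y, hy, fun _ => hd⟩
    · exact ⟨0, hN0, fun h' => absurd h' h⟩
  choose f hfN hfd using hnet'
  set u : ℕ → E := fun k => Nat.rec x (fun _ w => ε⁻¹ • (w - f w)) k with hu
  have hus : ∀ k, u (k+1) = ε⁻¹ • (u k - f (u k)) := fun k => rfl
  have hub : ∀ k, ‖u k‖ ≤ 1 := by
    intro k
    induction k with
    | zero => exact mem_closedBall_zero_iff.1 hx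
    | succ k ih =>
      rw [hus k, norm_smul, norm_inv, Real.norm_eq_abs, abs_of_pos hε]
      have hd : ‖u k - f (u k)‖ ≤ ε := by rw [← dist_eq_norm]; exact hfd _ ih
      calc ε⁻¹ * ‖u k - f (u k)‖ ≤ ε⁻¹ * ε := by
            exact mul_le_mul_of_nonneg_left hd (by positivity)
        _ = 1 := inv_mul_cancel₀ hε.ne'
  have hexp : ∀ K, x = (∑ k ∈ Finset.range K, ε ^ k • f (u k)) + ε ^ K • u K := by
    intro K
    induction K with
    | zero => simp only [Finset.range_zero, Finset.sum_empty, pow_zero, one_smul, zero_add]; rfl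
    | succ K ih =>
      have hstep : ε ^ (K+1) • u (K+1) = ε ^ K • u K - ε ^ K • f (u K) := by
        rw [hus K, smul_smul, pow_succ, mul_assoc, mul_inv_cancel₀ hε.ne', mul_one, smul_sub]
      rw [Finset.sum_range_succ]
      calc x = (∑ k ∈ Finset.range K, ε ^ k • f (u k)) + ε ^ K • u K := ih
        _ = (∑ k ∈ Finset.range K, ε ^ k • f (u k)) + ε ^ K • f (u K) + ε ^ (K+1) • u (K+1) := by
            rw [hstep]; abel
  have hK2 : ∀ K, (∑ j ∈ Finset.range K, ε ^ j) ≤ 2 := by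
    intro K
    calc ∑ j ∈ Finset.range K, ε ^ j ≤ ∑ j ∈ Finset.range K, (1/2:ℝ) ^ j :=
          Finset.sum_le_sum fun j _ => pow_le_pow_left₀ hε.le hε2 j
      _ ≤ 2 := sum_geometric_two_le K
  -- partial sums are in the convex hull
  have hmem : ∀ K, (∑ k ∈ Finset.range K, (ε ^ k / 2) • f (u k)) ∈ convexHull ℝ N := by
    intro K
    set w : ℕ → ℝ := fun k => if k < K then ε ^ k / 2 else 1 - (∑ j ∈ Finset.range K, ε ^ j) / 2
    set p : ℕ → E := fun k => if k < K then f (u k) else 0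
    have h₀ : ∀ k ∈ Finset.range (K+1), 0 ≤ w k := by
      intro k _
      by_cases h : k < K
      · simp only [w, if_pos h]; positivity
      · simp only [w, if_neg h]; linarith [hK2 K]
    have hsum : ∑ k ∈ Finset.range (K+1), w k = 1 := by
      rw [Finset.sum_range_succ]
      have h1 : ∑ k ∈ Finset.range K, w k = (∑ j ∈ Finset.range K, ε ^ j) / 2 := by
        rw [Finset.sum_div]
        refine Finset.sum_congr rfl fun k hk => ?_
        simp [w, Finset.mem_range.1 hk]
      rw [h1]
      simp [w]
    have hz : ∀ k ∈ Finset.range (K+1), p k ∈ convexHull ℝ N := by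
      intro k _
      by_cases h : k < K
      · simp only [p, if_pos h]; exact subset_convexHull ℝ N (hfN (u k))
      · simp only [p, if_neg h]; exact subset_convexHull ℝ N hN0
    have := (convex_convexHull ℝ N).sum_mem h₀ hsum hz
    have heq : ∑ k ∈ Finset.range (K+1), w k • p k
        = ∑ k ∈ Finset.range K, (ε ^ k / 2) • f (u k) := by
      rw [Finset.sum_range_succ]
      have h2 : w K • p K = 0 := by simp [w, p]
      rw [h2, add_zero]
      refine Finset.sum_congr rfl fun k hk => ?_
      simp [w, p, Finset.mem_range.1 hk]
    rwa [heq] at this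
  -- limits
  have hval : ∀ K, (∑ k ∈ Finset.range K, (ε ^ k / 2) • f (u k))
      = (2⁻¹ : ℝ) • x - (2⁻¹ : ℝ) • (ε ^ K • u K) := by
    intro K
    have h1 : ∑ k ∈ Finset.range K, (ε ^ k / 2) • f (u k)
        = (2⁻¹ : ℝ) • ∑ k ∈ Finset.range K, ε ^ k • f (u k) := by
      rw [Finset.smul_sum]
      refine Finset.sum_congr rfl fun k _ => ?_
      rw [smul_smul]
      congr 1
      ring
    rw [h1, ← smul_sub]
    congr 1
    rw [eq_sub_iff_add_eq]
    exact (hexp K).symm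
  have htend : Tendsto (fun K => ∑ k ∈ Finset.range K, (ε ^ k / 2) • f (u k)) atTop
      (𝓝 ((2⁻¹ : ℝ) • x)) := by
    rw [← tendsto_sub_nhds_zero_iff]
    refine squeeze_zero_norm (a := fun K => ε ^ K) (fun K => ?_)
      (tendsto_pow_atTop_nhds_zero_of_lt_one hε.le (by linarith))
    · rw [hval K]
      have : (2⁻¹:ℝ) • x - (2⁻¹:ℝ) • (ε ^ K • u K) - (2⁻¹:ℝ) • x = -((2⁻¹:ℝ) • (ε ^ K • u K)) := by
        abel
      rw [this, norm_neg, norm_smul, norm_smul]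
      have h1 : ‖u K‖ ≤ 1 := hub K
      have h2 : ‖(2⁻¹:ℝ)‖ = 2⁻¹ := by rw [Real.norm_eq_abs]; norm_num
      have h3 : ‖ε ^ K‖ = ε ^ K := by rw [Real.norm_eq_abs, abs_of_pos (pow_pos hε K)]
      rw [h2, h3]
      nlinarith [pow_pos hε K]
  have hhalf : (2⁻¹ : ℝ) • x ∈ convexHull ℝ N :=
    ((hfin.isCompact_convexHull (𝕜 := ℝ)).isClosed).mem_of_tendsto htend
      (Filter.Eventually.of_forall hmem)
  refine ⟨(2⁻¹ : ℝ) • x, hhalf, ?_⟩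
  show (2:ℝ) • ((2⁻¹:ℝ) • x) = x
  rw [smul_smul]
  norm_num


lemma factorial_ge_pow (m : ℕ) : ((m : ℝ) / 3) ^ m ≤ m.factorial := by
  induction m with
  | zero => simp
  | succ k ih =>
    rcases Nat.eq_zero_or_pos k with rfl | hk
    · norm_num
    · have hk' : (0:ℝ) < k := by exact_mod_cast hk
      have e1 : (((k:ℝ)+1)/3) ^ k = ((k:ℝ)/3)^k * (1 + 1/(k:ℝ))^k := by
        rw [← mul_pow]
        congr 1
        field_simp
      have e2 : (1 + 1/(k:ℝ))^k ≤ 3 := by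
        have h1 : 1 + 1/(k:ℝ) ≤ Real.exp (1/(k:ℝ)) := by
          have := Real.add_one_le_exp (1/(k:ℝ))
          linarith
        calc (1 + 1/(k:ℝ))^k ≤ (Real.exp (1/(k:ℝ)))^k := by
              apply pow_le_pow_left₀ (by positivity) h1
          _ = Real.exp 1 := by
              rw [← Real.exp_nat_mul]
              congr 1
              field_simp
          _ ≤ 3 := by linarith [Real.exp_one_lt_d9]
      have key : (((k:ℝ)+1)/3) ^ k ≤ 3 * ((k:ℝ)/3)^k := by
        rw [e1]
        have hp : (0:ℝ) ≤ ((k:ℝ)/3)^k := by positivity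
        nlinarith [pow_nonneg (by positivity : (0:ℝ) ≤ 1 + 1/(k:ℝ)) k]
      have hcast : ((k+1 : ℕ) : ℝ) = (k:ℝ) + 1 := by push_cast; ring
      have hfact : ((k+1).factorial : ℝ) = ((k:ℝ)+1) * k.factorial := by
        rw [Nat.factorial_succ]; push_cast; ring
      rw [hcast, hfact]
      calc (((k:ℝ)+1)/3) ^ (k+1) = (((k:ℝ)+1)/3) ^ k * (((k:ℝ)+1)/3) := by rw [pow_succ]
        _ ≤ (3 * ((k:ℝ)/3)^k) * (((k:ℝ)+1)/3) := by
            apply mul_le_mul_of_nonneg_right key (by positivity)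
        _ = ((k:ℝ)+1) * ((k:ℝ)/3)^k := by ring
        _ ≤ ((k:ℝ)+1) * k.factorial := by
            apply mul_le_mul_of_nonneg_left ih (by positivity)

lemma choose_le_pow_real {n m : ℕ} (hm : 1 ≤ m) : (n.choose m : ℝ) ≤ (3 * n / m) ^ m := by
  have h1 : (m.factorial : ℝ) * n.choose m ≤ (n : ℝ) ^ m := by
    have := Nat.descFactorial_le_pow n m
    rw [Nat.descFactorial_eq_factorial_mul_choose] at this
    exact_mod_cast this
  have hm' : (0:ℝ) < m := by exact_mod_cast hm
  have h2 : (0:ℝ) < ((m:ℝ)/3)^m := by positivity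
  have h3 : ((m:ℝ)/3)^m * (n.choose m : ℝ) ≤ (n:ℝ)^m := by
    calc ((m:ℝ)/3)^m * (n.choose m : ℝ) ≤ (m.factorial : ℝ) * n.choose m := by
          apply mul_le_mul_of_nonneg_right (factorial_ge_pow m) (by positivity)
      _ ≤ (n:ℝ)^m := h1
  rw [← le_div_iff₀' h2] at h3
  calc (n.choose m : ℝ) ≤ (n:ℝ)^m / ((m:ℝ)/3)^m := h3
    _ = ((n:ℝ) / ((m:ℝ)/3))^m := (div_pow _ _ _).symm
    _ = (3 * n / m) ^ m := by congr 1; field_simp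

end Aux

/-- `Ũ_m`: vectors in the Euclidean unit ball of `ℝⁿ` with at most `m` nonzero coordinates. -/
def sparseBall (n m : ℕ) : Set (EuclideanSpace ℝ (Fin n)) :=
  {x | ‖x‖ ≤ 1 ∧ {i | x i ≠ 0}.ncard ≤ m}

/-- Lemma `cover`, first part: there is an absolute constant `c > 0` such that
for every `0 < ε ≤ 1/2` and `1 ≤ m ≤ n` there is an `ε`-cover `Λ ⊆ B₂ⁿ` of `Ũ_m` with
`Ũ_m ⊆ 2 conv Λ` and `|Λ| ≤ exp(c m log(c n/(m ε)))`. -/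
theorem stmt4 :
    ∃ c : ℝ, 0 < c ∧
      ∀ (n m : ℕ) (ε : ℝ), 0 < ε → ε ≤ 1 / 2 → 1 ≤ m → m ≤ n →
      ∃ Λ : Set (EuclideanSpace ℝ (Fin n)),
        Λ ⊆ closedBall 0 1 ∧
        (∀ x ∈ sparseBall n m, ∃ y ∈ Λ, dist x y ≤ ε) ∧
        sparseBall n m ⊆ (2 : ℝ) • convexHull ℝ Λ ∧
        Λ.Finite ∧ (Λ.ncard : ℝ) ≤ Real.exp (c * m * Real.log (c * n / (m * ε))) := by
  classical
  refine ⟨18, by norm_num, ?_⟩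
  intro n m ε hε hε2 hm hmn
  obtain ⟨N₀, hN₀sub, hN₀net, hN₀fin, hN₀card⟩ := exists_net m hε
  set N : Set (EuclideanSpace ℝ (Fin m)) := insert 0 N₀ with hN
  have hNsub : N ⊆ closedBall 0 1 := insert_subset (mem_closedBall_self zero_le_one) hN₀sub
  have hNnet : ∀ x ∈ closedBall (0 : EuclideanSpace ℝ (Fin m)) 1, ∃ y ∈ N, dist x y ≤ ε := by
    intro x hx
    obtain ⟨y, hy1, hy2⟩ := hN₀net x hx
    exact ⟨y, mem_insert_of_mem _ hy1, hy2⟩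
  have hNfin : N.Finite := hN₀fin.insert 0
  have hN0 : (0 : EuclideanSpace ℝ (Fin m)) ∈ N := mem_insert _ _
  have hone_le : (1:ℝ) ≤ 3 / ε := by
    rw [le_div_iff₀ hε]; linarith
  have hNcard : (N.ncard : ℝ) ≤ 2 * (3/ε)^m := by
    have h1 : N.ncard ≤ N₀.ncard + 1 := Set.ncard_insert_le 0 N₀
    have h2 : ((1:ℝ) + 2/ε)^m ≤ (3/ε)^m := by
      apply pow_le_pow_left₀ (by positivity)
      rw [div_eq_mul_inv, div_eq_mul_inv]
      have : (1:ℝ) ≤ ε⁻¹ := by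
        rw [le_inv_comm₀ one_pos hε]; linarith
      nlinarith
    have h3 : (1:ℝ) ≤ (3/ε)^m := one_le_pow₀ hone_le
    have h4 : (N.ncard : ℝ) ≤ (N₀.ncard : ℝ) + 1 := by exact_mod_cast h1
    linarith
  -- the family of supports and the candidate set
  let T := {S : Finset (Fin n) // S.card = m}
  let Λf : Finset (EuclideanSpace ℝ (Fin n)) :=
    Finset.univ.biUnion fun S : T => (hNfin.toFinset.image (embedIso S.1 S.2))
  have hΛmem : ∀ z, z ∈ Λf ↔ ∃ S : T, ∃ y ∈ N, embedIso S.1 S.2 y = z := by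
    intro z
    simp only [Λf, Finset.mem_biUnion, Finset.mem_univ, true_and, Finset.mem_image,
      Set.Finite.mem_toFinset]
  -- a common preparation for points of the sparse ball
  have prep : ∀ x ∈ sparseBall n m, ∃ (S : T) (x' : EuclideanSpace ℝ (Fin m)),
      embedIso S.1 S.2 x' = x ∧ ‖x'‖ ≤ 1 := by
    intro x hx
    obtain ⟨hx1, hx2⟩ := hx
    have hsupp_fin : {i | x i ≠ 0}.Finite := Set.toFinite _
    have hs₀ : hsupp_fin.toFinset.card ≤ m := by
      rw [← Set.ncard_eq_toFinset_card _ hsupp_fin]; exact hx2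
    obtain ⟨S, hs₀S, -, hScard⟩ := Finset.exists_subsuperset_card_eq
      (Finset.subset_univ hsupp_fin.toFinset) hs₀ (by simpa using hmn)
    have hxS : ∀ i, i ∉ S → x i = 0 := by
      intro i hi
      by_contra h
      exact hi (hs₀S (by simpa using h))
    obtain ⟨x', hx'⟩ := embedIso_surj S hScard x hxS
    refine ⟨⟨S, hScard⟩, x', hx', ?_⟩
    rw [← (embedIso S hScard).norm_map x', hx']
    exact hx1
  refine ⟨↑Λf, ?_, ?_, ?_, Λf.finite_toSet, ?_⟩
  · -- Λ ⊆ closedBall 0 1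
    intro z hz
    obtain ⟨S, y, hyN, rfl⟩ := (hΛmem z).1 hz
    rw [mem_closedBall_zero_iff, (embedIso S.1 S.2).norm_map]
    exact mem_closedBall_zero_iff.1 (hNsub hyN)
  · -- ε-cover
    intro x hx
    obtain ⟨S, x', rfl, hx'norm⟩ := prep x hx
    obtain ⟨y', hy'N, hy'd⟩ := hNnet x' (mem_closedBall_zero_iff.2 hx'norm)
    refine ⟨embedIso S.1 S.2 y', (hΛmem _).2 ⟨S, y', hy'N, rfl⟩, ?_⟩
    rw [(embedIso S.1 S.2).dist_map]
    exact hy'd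
  · -- 2-absorption
    intro x hx
    obtain ⟨S, x', rfl, hx'norm⟩ := prep x hx
    have hx'mem : x' ∈ (2:ℝ) • convexHull ℝ N :=
      net_absorb hN0 hNfin hε hε2 hNnet (mem_closedBall_zero_iff.2 hx'norm)
    obtain ⟨w, hw, hwx⟩ := hx'mem
    refine ⟨embedIso S.1 S.2 w, ?_, ?_⟩
    · have himg : embedIso S.1 S.2 w ∈ (embedIso S.1 S.2).toLinearMap '' (convexHull ℝ N) :=
        ⟨w, hw, rfl⟩
      rw [(embedIso S.1 S.2).toLinearMap.image_convexHull] at himg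
      refine convexHull_mono ?_ himg
      rintro z ⟨y, hyN, rfl⟩
      exact (hΛmem _).2 ⟨S, y, hyN, rfl⟩
    · show (2:ℝ) • embedIso S.1 S.2 w = embedIso S.1 S.2 x'
      rw [← (embedIso S.1 S.2).map_smul]
      exact congrArg _ hwx
  · -- cardinality
    have hmpos : (0:ℝ) < m := by exact_mod_cast hm
    have hnpos : (0:ℝ) < n := by
      have : (1:ℕ) ≤ n := le_trans hm hmn
      exact_mod_cast this
    have hcard1 : (Λf.card : ℝ) ≤ (n.choose m : ℝ) * (N.ncard : ℝ) := by
      have h1 : Λf.card ≤ ∑ S : T, (hNfin.toFinset.image (embedIso S.1 S.2)).card :=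
        Finset.card_biUnion_le
      have h2 : ∑ S : T, (hNfin.toFinset.image (embedIso S.1 S.2)).card
          ≤ ∑ _S : T, hNfin.toFinset.card :=
        Finset.sum_le_sum fun S _ => Finset.card_image_le
      have h3 : ∑ _S : T, hNfin.toFinset.card = Fintype.card T * hNfin.toFinset.card := by
        rw [Finset.sum_const, Finset.card_univ, smul_eq_mul]
      have h4 : Fintype.card T = n.choose m := by
        show Fintype.card {S : Finset (Fin n) // S.card = m} = n.choose m
        rw [Fintype.card_finset_len, Fintype.card_fin]
      have h5 : hNfin.toFinset.card = N.ncard := (Set.ncard_eq_toFinset_card _ hNfin).symm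
      have := le_trans h1 (le_trans h2 (le_of_eq h3))
      rw [h4, h5] at this
      exact_mod_cast this
    have hchoose : (n.choose m : ℝ) ≤ (3 * n / m) ^ m := choose_le_pow_real hm
    set t : ℝ := 18 * n / (m * ε) with ht
    have htval : 2 * ((3 * n / m) ^ m * (3/ε)^m) ≤ t ^ m := by
      have h6 : (3 * (n:ℝ) / m) * (3/ε) = 9 * n / (m * ε) := by
        field_simp
        ring
      have h7 : (0:ℝ) ≤ 9 * n / (m * ε) := by positivity
      have h8 : (2:ℝ) ≤ 2 ^ m := by
        exact_mod_cast le_self_pow one_le_two (by omega : m ≠ 0)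
      calc 2 * ((3 * (n:ℝ) / m) ^ m * (3/ε)^m) = 2 * (9 * n / (m * ε)) ^ m := by
            rw [← mul_pow, h6]
        _ ≤ 2 ^ m * (9 * n / (m * ε)) ^ m := by
            apply mul_le_mul_of_nonneg_right h8 (by positivity)
        _ = (2 * (9 * n / (m * ε))) ^ m := by rw [mul_pow]
        _ = t ^ m := by rw [ht]; congr 1; field_simp; ring
    have hΛt : ((↑Λf : Set (EuclideanSpace ℝ (Fin n))).ncard : ℝ) ≤ t ^ m := by
      rw [Set.ncard_coe_finset]
      calc (Λf.card : ℝ) ≤ (n.choose m : ℝ) * (N.ncard : ℝ) := hcard1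
        _ ≤ (3 * n / m) ^ m * (2 * (3/ε)^m) := by
            apply mul_le_mul hchoose hNcard (by positivity) (by positivity)
        _ = 2 * ((3 * n / m) ^ m * (3/ε)^m) := by ring
        _ ≤ t ^ m := htval
    have ht1 : (1:ℝ) ≤ t := by
      rw [ht]
      rw [le_div_iff₀ (by positivity)]
      have hmn' : (m:ℝ) ≤ n := by exact_mod_cast hmn
      nlinarith
    have htpos : (0:ℝ) < t := lt_of_lt_of_le one_pos ht1
    have hlog : (0:ℝ) ≤ Real.log t := Real.log_nonneg ht1
    have hexp : t ^ m = Real.exp ((m:ℝ) * Real.log t) := by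
      rw [Real.exp_nat_mul, Real.exp_log htpos]
    calc ((↑Λf : Set (EuclideanSpace ℝ (Fin n))).ncard : ℝ) ≤ t ^ m := hΛt
      _ = Real.exp ((m:ℝ) * Real.log t) := hexp
      _ ≤ Real.exp (18 * (m:ℝ) * Real.log (18 * n / (m * ε))) := by
          rw [Real.exp_le_exp, ht]
          nlinarith
end

section
/- There exists an absolute constant c > 0 such that for every 0 < ε ≤ 1/2 and every 1 ≤ m ≤ n there is a set Λ' ⊂ S^{n-1} which is an ε-cover of U_m with respect to the Euclidean metric and has cardinality |Λ'| ≤ exp(c m log(c n/(m ε))). -/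
open Metric Set
open scoped ENNReal

/-- `U_m`: unit vectors of `ℝⁿ` with at most `m` nonzero coordinates. -/
def sparseSphere (n m : ℕ) : Set (EuclideanSpace ℝ (Fin n)) :=
  {x | ‖x‖ = 1 ∧ {i | x i ≠ 0}.ncard ≤ m}

namespace Stmt5Aux

/-- Extension-by-zero of a vector in `ℝ^m` to `ℝ^n`, supported on a given `m`-set `S`. -/
noncomputable def extFun (m : ℕ) {n : ℕ} (S : Finset (Fin n)) (h : S.card = m) :
    EuclideanSpace ℝ (Fin m) → EuclideanSpace ℝ (Fin n) := fun y => WithLp.toLp 2 fun j =>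
  if hj : j ∈ S then y ((S.orderIsoOfFin h).symm ⟨j, hj⟩) else 0

lemma extFun_dist {m n : ℕ} (S : Finset (Fin n)) (h : S.card = m)
    (y z : EuclideanSpace ℝ (Fin m)) :
    dist (extFun m S h y) (extFun m S h z) = dist y z := by
  rw [EuclideanSpace.dist_eq, EuclideanSpace.dist_eq]
  congr 1
  calc ∑ j, dist (extFun m S h y j) (extFun m S h z j) ^ 2
      = ∑ j ∈ S, dist (extFun m S h y j) (extFun m S h z j) ^ 2 :=
        (Finset.sum_subset (Finset.subset_univ S) (fun j _ hj => by
          simp [extFun, hj])).symm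
    _ = ∑ a : S, dist (extFun m S h y a) (extFun m S h z a) ^ 2 :=
        (Finset.sum_coe_sort S _).symm
    _ = ∑ a : S, dist (y ((S.orderIsoOfFin h).symm a)) (z ((S.orderIsoOfFin h).symm a)) ^ 2 := by
        refine Finset.sum_congr rfl fun a _ => ?_
        have ha : (a : Fin n) ∈ S := a.2
        simp [extFun, ha]
    _ = ∑ i, dist (y i) (z i) ^ 2 :=
        Equiv.sum_comp ((S.orderIsoOfFin h).symm.toEquiv) (fun i => dist (y i) (z i) ^ 2)

lemma extFun_zero {m n : ℕ} (S : Finset (Fin n)) (h : S.card = m) :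
    extFun m S h 0 = 0 := by
  ext j
  unfold extFun
  rw [PiLp.toLp_apply]
  split <;> rfl

lemma extFun_norm {m n : ℕ} (S : Finset (Fin n)) (h : S.card = m)
    (y : EuclideanSpace ℝ (Fin m)) : ‖extFun m S h y‖ = ‖y‖ := by
  rw [← dist_zero_right, ← dist_zero_right, ← extFun_zero S h, extFun_dist]

/-- Packing bound: an `ε`-separated subset of the unit sphere of `ℝ^m` has at most `(3/ε)^m`
elements. -/
lemma packing {m : ℕ} (hm : 1 ≤ m) {ε : ℝ} (hε : 0 < ε) (hε2 : ε ≤ 1 / 2)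
    (s : Finset (EuclideanSpace ℝ (Fin m)))
    (hs : ↑s ⊆ sphere (0 : EuclideanSpace ℝ (Fin m)) 1)
    (hsep : ∀ x ∈ s, ∀ y ∈ s, x ≠ y → ε < dist x y) :
    (s.card : ℝ) ≤ (3 / ε) ^ m := by
  haveI : Nonempty (Fin m) := Fin.pos_iff_nonempty.1 (by omega)
  set V := MeasureTheory.volume (ball (0 : EuclideanSpace ℝ (Fin m)) 1) with hV
  have hV0 : V ≠ 0 := (measure_ball_pos _ _ one_pos).ne'
  have hVtop : V ≠ ⊤ := (MeasureTheory.measure_ball_lt_top).ne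
  have hdisj : (↑s : Set (EuclideanSpace ℝ (Fin m))).PairwiseDisjoint (fun x => ball x (ε / 2)) := by
    intro x hx y hy hxy
    exact ball_disjoint_ball (by linarith [hsep x hx y hy hxy])
  have hfr : Module.finrank ℝ (EuclideanSpace ℝ (Fin m)) = m := finrank_euclideanSpace_fin
  have hsum : (s.card : ℝ≥0∞) * (ENNReal.ofReal ((ε / 2) ^ m) * V)
      ≤ ENNReal.ofReal ((1 + ε) ^ m) * V := by
    calc (s.card : ℝ≥0∞) * (ENNReal.ofReal ((ε / 2) ^ m) * V)
        = ∑ x ∈ s, MeasureTheory.volume (ball x (ε / 2)) := by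
          rw [Finset.sum_congr rfl (fun x _ => by
            rw [MeasureTheory.Measure.addHaar_ball _ x (by positivity : (0:ℝ) ≤ ε / 2), hfr])]
          simp [Finset.sum_const, mul_comm]
          rfl
      _ = MeasureTheory.volume (⋃ x ∈ s, ball x (ε / 2)) :=
          (MeasureTheory.measure_biUnion_finset hdisj fun x _ => measurableSet_ball).symm
      _ ≤ MeasureTheory.volume (ball (0 : EuclideanSpace ℝ (Fin m)) (1 + ε)) := by
          refine MeasureTheory.measure_mono ?_
          intro z hz
          simp only [Set.mem_iUnion, exists_prop] at hz
          obtain ⟨x, hx, hzx⟩ := hz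
          have hx1 : ‖x‖ = 1 := mem_sphere_zero_iff_norm.1 (hs hx)
          rw [mem_ball] at hzx ⊢
          have ht := dist_triangle z x 0
          simp only [dist_zero_right] at ht ⊢
          rw [hx1] at ht
          linarith
      _ = ENNReal.ofReal ((1 + ε) ^ m) * V := by
          rw [MeasureTheory.Measure.addHaar_ball _ _ (by linarith : (0:ℝ) ≤ 1 + ε), hfr]
  rw [← mul_assoc] at hsum
  have h1 : (s.card : ℝ≥0∞) * ENNReal.ofReal ((ε / 2) ^ m) ≤ ENNReal.ofReal ((1 + ε) ^ m) :=
    (ENNReal.mul_le_mul_iff_left hV0 hVtop).1 hsum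
  have h2 : (s.card : ℝ) * (ε / 2) ^ m ≤ (1 + ε) ^ m := by
    rw [← ENNReal.ofReal_natCast, ← ENNReal.ofReal_mul (by positivity)] at h1
    exact (ENNReal.ofReal_le_ofReal_iff (by positivity)).1 h1
  have hp : (0:ℝ) < (ε / 2) ^ m := by positivity
  rw [← le_div_iff₀ hp] at h2
  refine h2.trans ?_
  rw [← div_pow]
  refine pow_le_pow_left₀ (by positivity) ?_ m
  rw [div_le_div_iff₀ (by positivity) hε]
  nlinarith

/-- A maximal `ε`-separated subset of the unit sphere of `ℝ^m` is an `ε`-net of size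
at most `(3/ε)^m`, consisting of points of the sphere. -/
lemma net {m : ℕ} (hm : 1 ≤ m) {ε : ℝ} (hε : 0 < ε) (hε2 : ε ≤ 1 / 2) :
    ∃ Λ₀ : Finset (EuclideanSpace ℝ (Fin m)),
      ↑Λ₀ ⊆ sphere (0 : EuclideanSpace ℝ (Fin m)) 1 ∧
      (∀ x ∈ sphere (0 : EuclideanSpace ℝ (Fin m)) 1, ∃ y ∈ Λ₀, dist x y ≤ ε) ∧
      (Λ₀.card : ℝ) ≤ (3 / ε) ^ m := by
  classical
  set P : Finset (EuclideanSpace ℝ (Fin m)) → Prop := fun s =>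
    ↑s ⊆ sphere (0 : EuclideanSpace ℝ (Fin m)) 1 ∧
      ∀ x ∈ s, ∀ y ∈ s, x ≠ y → ε < dist x y with hP
  set A : Set ℕ := {k | ∃ s, P s ∧ s.card = k} with hA
  have hbound : ∀ k ∈ A, k ≤ Nat.floor ((3 / ε : ℝ) ^ m) := by
    rintro k ⟨s, ⟨hs1, hs2⟩, rfl⟩
    exact Nat.le_floor (packing hm hε hε2 s hs1 hs2)
  have hA0 : (0 : ℕ) ∈ A := ⟨∅, ⟨by simp [hP], by simp⟩, rfl⟩
  have hAbdd : BddAbove A := ⟨Nat.floor ((3 / ε : ℝ) ^ m), fun k hk => hbound k hk⟩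
  have hmem : sSup A ∈ A := Nat.sSup_mem ⟨0, hA0⟩ hAbdd
  obtain ⟨s, ⟨hs1, hs2⟩, hcard⟩ := hmem
  refine ⟨s, hs1, ?_, packing hm hε hε2 s hs1 hs2⟩
  intro x hx
  by_contra hcon
  push_neg at hcon
  have hxs : x ∉ s := fun hxs => absurd (hcon x hxs) (by simp [dist_self]; exact hε.le)
  have hins : P (insert x s) := by
    constructor
    · rw [Finset.coe_insert]
      exact Set.insert_subset hx hs1
    · intro a ha b hb hab
      rcases Finset.mem_insert.1 ha with rfl | ha' <;>
        rcases Finset.mem_insert.1 hb with rfl | hb'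
      · exact absurd rfl hab
      · exact hcon b hb'
      · rw [dist_comm]; exact hcon a ha'
      · exact hs2 a ha' b hb' hab
  have : s.card + 1 ∈ A := ⟨insert x s, hins, by rw [Finset.card_insert_of_notMem hxs]⟩
  have := le_csSup hAbdd this
  omega

/-- The counting estimate: `C(n,m) (3/ε)^m ≤ exp (9 m log (9n/(mε)))`. -/
lemma count_bound {n m : ℕ} {ε : ℝ} (hε : 0 < ε) (hε2 : ε ≤ 1 / 2) (hm : 1 ≤ m) (hmn : m ≤ n) :
    (n.choose m : ℝ) * (3 / ε) ^ m ≤ Real.exp (9 * m * Real.log (9 * n / (m * ε))) := by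
  have hm0 : (0:ℝ) < m := by exact_mod_cast hm
  have hmn' : (m:ℝ) ≤ n := by exact_mod_cast hmn
  have hn0 : (0:ℝ) < n := lt_of_lt_of_le hm0 hmn'
  have hchoose : (n.choose m : ℝ) ≤ (n:ℝ) ^ m / (m.factorial : ℝ) := Nat.choose_le_pow_div m n
  have hfacpos : (0:ℝ) < (m.factorial : ℝ) := by exact_mod_cast m.factorial_pos
  have hfac : ((m:ℝ)) ^ m / (m.factorial : ℝ) ≤ Real.exp m :=
    Real.pow_div_factorial_le_exp (x := (m:ℝ)) (by positivity) m
  have h1 : (n:ℝ) ^ m / (m.factorial : ℝ) ≤ (n:ℝ) ^ m * Real.exp m / (m:ℝ) ^ m := by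
    rw [div_le_div_iff₀ hfacpos (by positivity)]
    rw [div_le_iff₀ hfacpos] at hfac
    calc (n:ℝ) ^ m * (m:ℝ) ^ m ≤ (n:ℝ) ^ m * (Real.exp m * m.factorial) :=
          mul_le_mul_of_nonneg_left hfac (by positivity)
      _ = (n:ℝ) ^ m * Real.exp m * m.factorial := by ring
  have hexp : Real.exp (m:ℝ) = Real.exp 1 ^ m := by
    rw [← Real.exp_nat_mul]; norm_num
  set x := 9 * (n:ℝ) / (m * ε) with hx
  have hx1 : (1:ℝ) ≤ x := by
    rw [hx, le_div_iff₀ (by positivity)]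
    nlinarith
  have hx0 : (0:ℝ) < x := lt_of_lt_of_le one_pos hx1
  calc (n.choose m : ℝ) * (3 / ε) ^ m
      ≤ ((n:ℝ) ^ m * Real.exp m / (m:ℝ) ^ m) * (3 / ε) ^ m :=
        mul_le_mul_of_nonneg_right (hchoose.trans h1) (by positivity)
    _ = (((n:ℝ) * Real.exp 1 / m) * (3 / ε)) ^ m := by
        rw [hexp, ← mul_pow, ← div_pow, ← mul_pow]
    _ ≤ x ^ m := by
        refine pow_le_pow_left₀ (by positivity) ?_ m
        have e1 : ((n:ℝ) * Real.exp 1 / m) * (3 / ε) = (3 * Real.exp 1) * ((n:ℝ) / (m * ε)) := by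
          field_simp
        have e2 : x = 9 * ((n:ℝ) / (m * ε)) := by rw [hx]; ring
        rw [e1, e2]
        exact mul_le_mul_of_nonneg_right (by nlinarith [Real.exp_one_lt_d9]) (by positivity)
    _ = Real.exp (m * Real.log x) := by
        rw [Real.exp_nat_mul, Real.exp_log hx0]
    _ ≤ Real.exp (9 * m * Real.log x) := by
        refine Real.exp_le_exp.2 ?_
        have hl : 0 ≤ Real.log x := Real.log_nonneg hx1
        nlinarith

end Stmt5Aux

/-- Lemma `cover`, "moreover" part: there is an absolute constant `c > 0` such
that for every `0 < ε ≤ 1/2` and `1 ≤ m ≤ n` there is an `ε`-cover `Λ' ⊆ S^{n-1}` of `U_m`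
with `|Λ'| ≤ exp(c m log(c n/(m ε)))`. -/
theorem stmt5 :
    ∃ c : ℝ, 0 < c ∧
      ∀ (n m : ℕ) (ε : ℝ), 0 < ε → ε ≤ 1 / 2 → 1 ≤ m → m ≤ n →
      ∃ Λ' : Set (EuclideanSpace ℝ (Fin n)),
        Λ' ⊆ sphere 0 1 ∧
        (∀ x ∈ sparseSphere n m, ∃ y ∈ Λ', dist x y ≤ ε) ∧
        Λ'.Finite ∧ (Λ'.ncard : ℝ) ≤ Real.exp (c * m * Real.log (c * n / (m * ε))) := by
  refine ⟨9, by norm_num, ?_⟩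
  intro n m ε hε hε2 hm hmn
  classical
  obtain ⟨Λ₀, hΛ₀s, hΛ₀c, hΛ₀card⟩ := Stmt5Aux.net hm hε hε2
  set F : Finset (Fin n) → Finset (EuclideanSpace ℝ (Fin n)) := fun S =>
    if h : S.card = m then Λ₀.image (Stmt5Aux.extFun m S h) else ∅ with hF
  have hFmem : ∀ S, ∀ z ∈ F S, ∃ h : S.card = m, ∃ y ∈ Λ₀, z = Stmt5Aux.extFun m S h y := by
    intro S z hz
    by_cases h : S.card = m
    · simp only [hF, dif_pos h, Finset.mem_image] at hz
      obtain ⟨y, hy, hyz⟩ := hz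
      exact ⟨h, y, hy, hyz.symm⟩
    · simp [hF, dif_neg h] at hz
  have hFcard : ∀ S, (F S).card ≤ Λ₀.card := by
    intro S
    by_cases h : S.card = m
    · simp only [hF, dif_pos h]
      exact Finset.card_image_le
    · simp [hF, dif_neg h]
  set Λ'F := (Finset.powersetCard m (Finset.univ : Finset (Fin n))).biUnion F with hΛ'
  refine ⟨↑Λ'F, ?_, ?_, Λ'F.finite_toSet, ?_⟩
  · -- subset of the sphere
    intro z hz
    rw [Finset.mem_coe, hΛ', Finset.mem_biUnion] at hz
    obtain ⟨S, _, hzS⟩ := hz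
    obtain ⟨h, y, hy, rfl⟩ := hFmem S z hzS
    rw [mem_sphere_zero_iff_norm, Stmt5Aux.extFun_norm]
    exact mem_sphere_zero_iff_norm.1 (hΛ₀s hy)
  · -- covering
    rintro v ⟨hv1, hv2⟩
    have hTfin : ({i | v i ≠ 0} : Set (Fin n)).Finite := Set.toFinite _
    have hTcard : hTfin.toFinset.card ≤ m := by
      rw [← Set.ncard_eq_toFinset_card _ hTfin]
      exact hv2
    obtain ⟨S, hTS, -, hScard⟩ := Finset.exists_subsuperset_card_eq
      (Finset.subset_univ hTfin.toFinset) hTcard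
      (by rw [Finset.card_univ, Fintype.card_fin]; exact hmn)
    set w : EuclideanSpace ℝ (Fin m) := WithLp.toLp 2 fun i => v ((S.orderIsoOfFin hScard) i) with hw
    have hEw : Stmt5Aux.extFun m S hScard w = v := by
      ext j
      unfold Stmt5Aux.extFun
      rw [PiLp.toLp_apply]
      split
      · next hj =>
          show v ((S.orderIsoOfFin hScard) ((S.orderIsoOfFin hScard).symm ⟨j, hj⟩) : Fin n) = v j
          rw [OrderIso.apply_symm_apply]
      · next hj =>
          by_contra hne
          have : j ∈ {i | v i ≠ 0} := fun h => hne h.symm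
          exact hj (hTS (hTfin.mem_toFinset.2 this))
    have hwn : w ∈ sphere (0 : EuclideanSpace ℝ (Fin m)) 1 := by
      rw [mem_sphere_zero_iff_norm, ← Stmt5Aux.extFun_norm S hScard, hEw]
      exact hv1
    obtain ⟨y₀, hy₀, hdy₀⟩ := hΛ₀c w hwn
    refine ⟨Stmt5Aux.extFun m S hScard y₀, ?_, ?_⟩
    · rw [Finset.mem_coe, hΛ', Finset.mem_biUnion]
      refine ⟨S, Finset.mem_powersetCard_univ.2 hScard, ?_⟩
      simp only [hF, dif_pos hScard]
      exact Finset.mem_image_of_mem _ hy₀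
    · rw [← hEw, Stmt5Aux.extFun_dist]
      exact hdy₀
  · -- cardinality
    rw [Set.ncard_coe_finset]
    have h1 : Λ'F.card ≤ n.choose m * Λ₀.card := by
      refine Finset.card_biUnion_le.trans ?_
      have := Finset.sum_le_card_nsmul (Finset.powersetCard m (Finset.univ : Finset (Fin n)))
        (fun S => (F S).card) Λ₀.card (fun S _ => hFcard S)
      rw [smul_eq_mul, Finset.card_powersetCard, Finset.card_univ, Fintype.card_fin] at this
      exact this
    have h2 : (Λ'F.card : ℝ) ≤ (n.choose m : ℝ) * (3 / ε) ^ m := by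
      calc (Λ'F.card : ℝ) ≤ (n.choose m : ℝ) * (Λ₀.card : ℝ) := by exact_mod_cast h1
        _ ≤ (n.choose m : ℝ) * (3 / ε) ^ m :=
            mul_le_mul_of_nonneg_left hΛ₀card (by positivity)
    exact h2.trans (Stmt5Aux.count_bound hε hε2 hm hmn)
end

section
/- There exists an absolute constant c > 0 such that for every 0 < ε ≤ 1/2, every 1 ≤ m ≤ n with 2m ≤ n, and every 0 < r ≤ 1, there exists a set Λ̄ ⊂ rB₂ⁿ with (U_m − U_m) ∩ rB₂ⁿ ⊂ 2 conv Λ̄ and |Λ̄| ≤ exp(c m log(c n/(m ε))). -/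
open Metric Set
open scoped Pointwise

open MeasureTheory
open scoped ENNReal

lemma netLemma (d : ℕ) {r : ℝ} (hr : 0 < r) :
    ∃ N : Finset (EuclideanSpace ℝ (Fin d)), ↑N ⊆ closedBall (0 : EuclideanSpace ℝ (Fin d)) r ∧
      N.card ≤ 8 ^ d ∧ ∀ y ∈ closedBall (0 : EuclideanSpace ℝ (Fin d)) r, ∃ p ∈ N, dist y p ≤ r / 2 := by
  classical
  set E := EuclideanSpace ℝ (Fin d)
  set P : Finset E → Prop := fun s => ↑s ⊆ closedBall (0:E) r ∧
    (↑s : Set E).Pairwise fun p q => r/2 < dist p q with hP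
  have hcard : ∀ s, P s → s.card ≤ 8 ^ d := by
    intro s hs
    have hdisj : (↑s : Set E).PairwiseDisjoint fun p => ball p (r/4) := by
      intro p hp q hq hpq
      have := hs.2 hp hq hpq
      exact ball_disjoint_ball (by linarith)
    have hsum := (measure_biUnion_finset (μ := volume) hdisj fun p _ => measurableSet_ball).symm
    have hsub : (⋃ p ∈ s, ball p (r/4)) ⊆ ball (0:E) (2*r) := by
      intro y hy
      simp only [Set.mem_iUnion] at hy
      obtain ⟨p, hp, hyp⟩ := hy
      have h1 : dist p 0 ≤ r := hs.1 hp
      have h2 : dist y p < r/4 := hyp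
      have := dist_triangle y p 0
      simp only [mem_ball]
      linarith
    have hle : ∑ p ∈ s, volume (ball p (r/4)) ≤ volume (ball (0:E) (2*r)) := by
      rw [hsum]; exact measure_mono hsub
    have hdim : Module.finrank ℝ E = d := finrank_euclideanSpace_fin
    set B := volume (ball (0:E) 1) with hBdef
    have hball : ∀ p : E, volume (ball p (r/4)) = ENNReal.ofReal ((r/4)^d) * B := by
      intro p
      rw [hBdef, Measure.addHaar_ball_of_pos volume p (by linarith), hdim]
    have hRHS : volume (ball (0:E) (2*r)) = ENNReal.ofReal ((2*r)^d) * B := by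
      rw [hBdef, Measure.addHaar_ball_of_pos volume _ (by linarith), hdim]
    rw [Finset.sum_congr rfl fun p _ => hball p, Finset.sum_const, hRHS] at hle
    have hB0 : B ≠ 0 := (measure_ball_pos _ _ one_pos).ne'
    have hBt : B ≠ ⊤ := measure_ball_lt_top.ne
    rw [nsmul_eq_mul, ← mul_assoc] at hle
    have hle2 : (s.card : ℝ≥0∞) * ENNReal.ofReal ((r/4)^d) ≤ ENNReal.ofReal ((2*r)^d) :=
      (ENNReal.mul_le_mul_iff_left hB0 hBt).mp hle
    have h2r : ((2*r):ℝ)^d = 8^d * (r/4)^d := by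
      rw [← mul_pow]; ring_nf
    rw [h2r, ENNReal.ofReal_mul (by positivity)] at hle2
    have hle3 : (s.card : ℝ≥0∞) ≤ ENNReal.ofReal ((8:ℝ)^d) :=
      (ENNReal.mul_le_mul_iff_left (by positivity) ENNReal.ofReal_ne_top).mp hle2
    have : ((8:ℝ)^d) = ((8^d : ℕ) : ℝ) := by push_cast; ring
    rw [this, ENNReal.ofReal_natCast] at hle3
    exact_mod_cast hle3
  set P' : ℕ → Prop := fun k => ∃ s : Finset E, P s ∧ s.card = k with hP'
  have h0 : P' 0 := ⟨∅, ⟨by simp, by simp⟩, rfl⟩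
  have hbd : ∀ k, P' k → k ≤ 8^d := by rintro k ⟨s, hs, rfl⟩; exact hcard s hs
  obtain ⟨s, hs, hsc⟩ : P' (Nat.findGreatest P' (8^d)) :=
    Nat.findGreatest_spec (Nat.zero_le _) h0
  refine ⟨s, hs.1, hcard s hs, ?_⟩
  intro y hy
  by_contra hcon
  push_neg at hcon
  have hsep : ∀ p ∈ s, r/2 < dist y p := hcon
  have hym : y ∉ s := by
    intro h
    have := hsep y h
    simp only [dist_self] at this
    linarith
  have hP2 : P (insert y s) := by
    constructor
    · rw [Finset.coe_insert]
      exact Set.insert_subset hy hs.1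
    · rw [Finset.coe_insert]
      refine (letI : Std.Symm (fun p q : E => r/2 < dist p q) := ⟨?_⟩; Set.pairwise_insert_of_symm).mpr ⟨hs.2, fun p hp _ => hsep p hp⟩
      intro a b h
      rwa [dist_comm]
  have hcard2 : (insert y s).card = Nat.findGreatest P' (8^d) + 1 := by
    rw [Finset.card_insert_of_notMem hym, hsc]
  have hle : Nat.findGreatest P' (8^d) + 1 ≤ Nat.findGreatest P' (8^d) :=
    Nat.le_findGreatest (hbd _ ⟨insert y s, hP2, hcard2⟩) ⟨insert y s, hP2, hcard2⟩
  omega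

lemma netLemma' (E : Type*) [NormedAddCommGroup E] [InnerProductSpace ℝ E]
    [FiniteDimensional ℝ E] {r : ℝ} (hr : 0 < r) :
    ∃ N : Finset E, ↑N ⊆ closedBall (0:E) r ∧ N.card ≤ 8 ^ (Module.finrank ℝ E) ∧
      ∀ y ∈ closedBall (0:E) r, ∃ p ∈ N, dist y p ≤ r / 2 := by
  classical
  set T := (stdOrthonormalBasis ℝ E).repr
  obtain ⟨N₀, h1, h2, h3⟩ := netLemma (Module.finrank ℝ E) hr
  refine ⟨N₀.image T.symm, ?_, le_trans Finset.card_image_le h2, ?_⟩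
  · intro p hp
    simp only [Finset.coe_image, Set.mem_image, Finset.mem_coe] at hp
    obtain ⟨q, hq, rfl⟩ := hp
    have := h1 hq
    rw [mem_closedBall_zero_iff] at this ⊢
    rwa [LinearIsometryEquiv.norm_map]
  · intro y hy
    have hTy : T y ∈ closedBall (0 : EuclideanSpace ℝ (Fin (Module.finrank ℝ E))) r := by
      rw [mem_closedBall_zero_iff] at hy ⊢
      rwa [LinearIsometryEquiv.norm_map]
    obtain ⟨q, hq, hdq⟩ := h3 (T y) hTy
    refine ⟨T.symm q, Finset.mem_image_of_mem _ hq, ?_⟩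
    have : dist y (T.symm q) = dist (T y) q := by
      rw [← T.dist_map y (T.symm q), LinearIsometryEquiv.apply_symm_apply]
    rwa [this]

lemma absorb {E : Type*} [NormedAddCommGroup E] [NormedSpace ℝ E] (F : Submodule ℝ E) {r : ℝ}
    (hr : 0 < r) (N : Finset E) (hN0 : (0:E) ∈ N) (hsub : ↑N ⊆ closedBall (0:E) r ∩ ↑F)
    (hnet : ∀ y ∈ closedBall (0:E) r ∩ ↑F, ∃ p ∈ N, dist y p ≤ r/2) :
    closedBall (0:E) r ∩ ↑F ⊆ (2:ℝ) • convexHull ℝ (↑N : Set E) := by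
  set C := convexHull ℝ (↑N : Set E) with hC
  have hconv : Convex ℝ C := convex_convexHull _ _
  have h0C : (0:E) ∈ C := subset_convexHull _ _ hN0
  have hCcl : IsClosed ((2:ℝ) • C) := by
    have hcomp : IsCompact C := N.finite_toSet.isCompact_convexHull ℝ
    rw [show (2:ℝ) • C = (fun x => (2:ℝ) • x) '' C from rfl]
    exact (hcomp.image (continuous_const_smul _)).isClosed
  have main : ∀ k : ℕ, ∀ x ∈ closedBall (0:E) r ∩ ↑F, ∃ z ∈ C, ∃ y ∈ closedBall (0:E) r ∩ ↑F,
      x = (2 - 2*(2⁻¹:ℝ)^k) • z + ((2⁻¹:ℝ)^k) • y := by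
    intro k
    induction k with
    | zero =>
      intro x hx
      refine ⟨0, h0C, x, hx, by norm_num⟩
    | succ k ih =>
      intro x hx
      obtain ⟨z, hz, y, hy, hxy⟩ := ih x hx
      obtain ⟨p, hpN, hpd⟩ := hnet y hy
      have hpC : p ∈ C := subset_convexHull _ _ hpN
      set e : ℝ := (2⁻¹:ℝ)^k with he_def
      have he : 0 < e := by positivity
      have he1 : e ≤ 1 := pow_le_one₀ (by norm_num) (by norm_num)
      set a : ℝ := 2 - 2*e with ha_def
      have ha : 0 ≤ a := by simp only [ha_def]; linarith
      have hae : 0 < a + e := by simp only [ha_def]; linarith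
      set z' := (a/(a+e)) • z + (e/(a+e)) • p with hz'_def
      have hz' : z' ∈ C := hconv hz hpC (by positivity) (by positivity) (by field_simp)
      set y' := (2:ℝ) • (y - p) with hy'_def
      have hy' : y' ∈ closedBall (0:E) r ∩ ↑F := by
        constructor
        · rw [mem_closedBall_zero_iff, hy'_def, norm_smul, Real.norm_ofNat]
          have : ‖y - p‖ = dist y p := (dist_eq_norm y p).symm
          rw [this]; linarith
        · exact F.smul_mem _ (F.sub_mem hy.2 (hsub hpN).2)
      refine ⟨z', hz', y', hy', ?_⟩
      have hco : (2:ℝ) - 2*(2⁻¹:ℝ)^(k+1) = a + e := by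
        simp only [ha_def, he_def, pow_succ]; ring
      have hco2 : ((2⁻¹:ℝ))^(k+1) = e * 2⁻¹ := by rw [pow_succ]
      rw [hxy, hco, hco2, hz'_def, hy'_def]
      rw [smul_add, smul_smul, smul_smul, smul_smul, smul_sub]
      have c1 : (a+e) * (a/(a+e)) = a := by field_simp
      have c2 : (a+e) * (e/(a+e)) = e := by field_simp
      have c3 : e * 2⁻¹ * 2 = e := by ring
      rw [c1, c2, c3]
      abel
  intro x hx
  have hxcl : x ∈ closure ((2:ℝ) • C) := by
    rw [Metric.mem_closure_iff]
    intro ε hε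
    obtain ⟨k, hk⟩ := exists_pow_lt_of_lt_one (div_pos hε hr) (by norm_num : (2⁻¹:ℝ) < 1)
    obtain ⟨z, hz, y, hy, hxy⟩ := main k x hx
    have he : (0:ℝ) < (2⁻¹:ℝ)^k := by positivity
    have he1 : (2⁻¹:ℝ)^k ≤ 1 := pow_le_one₀ (by norm_num) (by norm_num)
    refine ⟨(2 - 2*(2⁻¹:ℝ)^k) • z, ?_, ?_⟩
    · have hmem : (1 - (2⁻¹:ℝ)^k) • z ∈ C :=
        hconv.smul_mem_of_zero_mem h0C hz ⟨by linarith, by linarith⟩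
      have h2 : (2 - 2*(2⁻¹:ℝ)^k) • z = (2:ℝ) • ((1 - (2⁻¹:ℝ)^k) • z) := by
        rw [smul_smul]; ring_nf
      rw [h2]
      exact Set.smul_mem_smul_set hmem
    · rw [hxy, dist_eq_norm, add_sub_cancel_left, norm_smul]
      have hyr : ‖y‖ ≤ r := mem_closedBall_zero_iff.mp hy.1
      have : ‖(2⁻¹:ℝ)^k‖ = (2⁻¹:ℝ)^k := by
        rw [Real.norm_eq_abs, abs_of_pos he]
      rw [this]
      calc (2⁻¹:ℝ)^k * ‖y‖ ≤ (2⁻¹:ℝ)^k * r := by nlinarith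
        _ < ε := by
          have h2 := (lt_div_iff₀ hr).mp hk
          linarith
  rwa [hCcl.closure_eq] at hxcl

def suppSubmodule {n : ℕ} (S : Finset (Fin n)) : Submodule ℝ (EuclideanSpace ℝ (Fin n)) where
  carrier := {x | ∀ i ∉ S, x i = 0}
  add_mem' := by
    intro x y hx hy i hi
    show x i + y i = 0
    rw [hx i hi, hy i hi, add_zero]
  zero_mem' := fun i _ => rfl
  smul_mem' := by
    intro c x hx i hi
    show c * x i = 0
    rw [hx i hi, mul_zero]

lemma finrank_suppSubmodule_le {n : ℕ} (S : Finset (Fin n)) :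
    Module.finrank ℝ (suppSubmodule S) ≤ S.card := by
  classical
  let f : suppSubmodule S →ₗ[ℝ] ({ i // i ∈ S } → ℝ) :=
    { toFun := fun x i => (x : EuclideanSpace ℝ (Fin n)) i
      map_add' := fun x y => rfl
      map_smul' := fun c x => rfl }
  have hinj : Function.Injective f := by
    intro x y hxy
    apply Subtype.ext
    ext i
    by_cases hi : i ∈ S
    · exact congrFun hxy ⟨i, hi⟩
    · rw [x.2 i hi, y.2 i hi]
  calc Module.finrank ℝ (suppSubmodule S) ≤ Module.finrank ℝ ({ i // i ∈ S } → ℝ) :=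
        LinearMap.finrank_le_finrank_of_injective hinj
    _ = S.card := by
        rw [Module.finrank_fintype_fun_eq_card, Fintype.card_coe]

lemma perSupport {n m : ℕ} (S : Finset (Fin n)) (hS : S.card = 2*m) {r : ℝ} (hr : 0 < r) :
    ∃ N : Finset (EuclideanSpace ℝ (Fin n)), ↑N ⊆ closedBall (0 : EuclideanSpace ℝ (Fin n)) r ∧
      N.card ≤ 8 ^ (2*m) + 1 ∧
      closedBall (0 : EuclideanSpace ℝ (Fin n)) r ∩ (suppSubmodule S : Set (EuclideanSpace ℝ (Fin n)))
        ⊆ (2:ℝ) • convexHull ℝ (↑N : Set (EuclideanSpace ℝ (Fin n))) := by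
  classical
  set E := EuclideanSpace ℝ (Fin n)
  set F := suppSubmodule S
  obtain ⟨N₁, hsub₁, hcard₁, hnet₁⟩ := netLemma' F hr
  set N : Finset E := insert 0 (N₁.image (Subtype.val)) with hN
  have hNsub : ↑N ⊆ closedBall (0:E) r ∩ (F : Set E) := by
    intro p hp
    rw [hN] at hp
    simp only [Finset.coe_insert, Set.mem_insert_iff, Finset.coe_image, Set.mem_image,
      Finset.mem_coe] at hp
    rcases hp with rfl | ⟨q, hq, rfl⟩
    · exact ⟨mem_closedBall_self hr.le, F.zero_mem⟩
    · constructor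
      · have := hsub₁ hq
        rw [mem_closedBall_zero_iff] at this ⊢
        exact this
      · exact q.2
  have hNnet : ∀ y ∈ closedBall (0:E) r ∩ (F : Set E), ∃ p ∈ N, dist y p ≤ r/2 := by
    rintro y ⟨hy1, hy2⟩
    have hy' : (⟨y, hy2⟩ : F) ∈ closedBall (0:F) r := by
      rw [mem_closedBall_zero_iff] at hy1 ⊢
      exact hy1
    obtain ⟨p, hp, hdp⟩ := hnet₁ _ hy'
    refine ⟨(p : E), ?_, hdp⟩
    rw [hN]
    exact Finset.mem_insert_of_mem (Finset.mem_image_of_mem _ hp)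
  have h0N : (0:E) ∈ N := by rw [hN]; exact Finset.mem_insert_self _ _
  refine ⟨N, fun p hp => (hNsub hp).1, ?_, absorb F hr N h0N hNsub hNnet⟩
  calc N.card ≤ (N₁.image (Subtype.val)).card + 1 := Finset.card_insert_le _ _
    _ ≤ N₁.card + 1 := by
        have := Finset.card_image_le (s := N₁) (f := (Subtype.val : F → E))
        omega
    _ ≤ 8 ^ (2*m) + 1 := by
        have h1 := hcard₁
        have h2 : Module.finrank ℝ F ≤ 2*m := hS ▸ finrank_suppSubmodule_le S
        have := Nat.pow_le_pow_right (by norm_num : 1 ≤ 8) h2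
        omega

lemma arith {n m : ℕ} {ε : ℝ} (hε : 0 < ε) (hε2 : ε ≤ 1/2) (hm : 1 ≤ m) (hmn : m ≤ n) :
    ((n.choose (2*m) * (8^(2*m)+1) : ℕ) : ℝ) ≤
      Real.exp (10 * m * Real.log (10 * n / (m * ε))) := by
  have hm' : (1:ℝ) ≤ m := by exact_mod_cast hm
  have hn' : (m:ℝ) ≤ n := by exact_mod_cast hmn
  have hmpos : (0:ℝ) < m := by linarith
  have hnpos : (0:ℝ) < n := by linarith
  set k := 2*m with hk
  have hk2 : 2 ≤ k := by omega
  have hkpos : (0:ℝ) < k := by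
    have : (0:ℕ) < k := by omega
    exact_mod_cast this
  set X : ℝ := 10 * n / (m * ε) with hX
  have hXpos : 0 < X := by positivity
  have hX1 : 20 * ((n:ℝ)/m) ≤ X := by
    have hrw : X = (10/ε) * ((n:ℝ)/m) := by rw [hX]; field_simp
    rw [hrw]
    have h20 : (20:ℝ) ≤ 10/ε := by
      rw [le_div_iff₀ hε]; linarith
    have : (0:ℝ) ≤ (n:ℝ)/m := by positivity
    nlinarith
  have hX20 : 20 ≤ X := by
    have h1 : (1:ℝ) ≤ (n:ℝ)/m := (one_le_div hmpos).mpr hn'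
    nlinarith
  have hds : (n.choose k) * (Nat.factorial k) ≤ n^k := by
    rw [mul_comm, ← Nat.descFactorial_eq_factorial_mul_choose]
    exact Nat.descFactorial_le_pow _ _
  have hfacpos : (0:ℝ) < (Nat.factorial k) := by exact_mod_cast Nat.factorial_pos k
  have hchoose : (n.choose k : ℝ) * (Nat.factorial k) ≤ (n:ℝ)^k := by exact_mod_cast hds
  have hexp : ((k:ℝ))^k / (Nat.factorial k) ≤ 3^k := by
    calc ((k:ℝ))^k / (Nat.factorial k) ≤ Real.exp k :=
        Real.pow_div_factorial_le_exp (x := (k:ℝ)) (le_of_lt hkpos) k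
      _ = Real.exp 1 ^ k := by rw [Real.exp_one_pow]
      _ ≤ 3^k := by
          apply pow_le_pow_left₀ (Real.exp_pos 1).le
          have := Real.exp_one_lt_d9
          linarith
  have hkk : (0:ℝ) < ((k:ℝ))^k := by positivity
  have hchoose2 : (n.choose k : ℝ) ≤ (n:ℝ)^k * 3^k / (k:ℝ)^k := by
    have h1 : ((k:ℝ))^k ≤ 3^k * (Nat.factorial k) := by
      rw [div_le_iff₀ hfacpos] at hexp; linarith
    have h2 : (n.choose k : ℝ) * ((k:ℝ))^k ≤ 3^k * (n:ℝ)^k := by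
      have hc0 : (0:ℝ) ≤ (n.choose k : ℝ) := by positivity
      have t1 : (n.choose k : ℝ) * ((k:ℝ))^k ≤ (n.choose k : ℝ) * (3^k * (Nat.factorial k)) :=
        mul_le_mul_of_nonneg_left h1 hc0
      have t2 : (3:ℝ)^k * ((n.choose k : ℝ) * (Nat.factorial k)) ≤ 3^k * (n:ℝ)^k :=
        mul_le_mul_of_nonneg_left hchoose (by positivity)
      linarith [t1, t2]
    rw [le_div_iff₀ hkk]
    nlinarith
  have h8 : ((8:ℝ)^k + 1) ≤ 16^k := by
    have h2k : (2:ℝ) ≤ 2^k := by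
      calc (2:ℝ) = 2^1 := (pow_one 2).symm
        _ ≤ 2^k := pow_le_pow_right₀ (by norm_num) (by omega)
    have h16 : (16:ℝ)^k = 2^k * 8^k := by rw [← mul_pow]; norm_num
    have h81 : (1:ℝ) ≤ 8^k := one_le_pow₀ (by norm_num : (1:ℝ) ≤ 8)
    have hint : 2*(8:ℝ)^k ≤ 2^k * 8^k := mul_le_mul_of_nonneg_right h2k (by positivity)
    linarith
  have htot : ((n.choose k * (8^k+1) : ℕ) : ℝ) ≤ (48 * n / k)^k := by
    push_cast
    have hmul := mul_le_mul hchoose2 h8 (by positivity) (by positivity)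
    calc (n.choose k : ℝ) * ((8:ℝ)^k + 1) ≤ ((n:ℝ)^k * 3^k / (k:ℝ)^k) * 16^k := hmul
      _ = (48 * n / k)^k := by
          have h316 : (3:ℝ)^k * 16^k = 48^k := by rw [← mul_pow]; norm_num
          rw [div_pow, mul_pow, ← h316]
          field_simp
  have h48 : (48 * (n:ℝ) / k) = 24 * n / m := by
    rw [hk]; push_cast; field_simp; ring
  have hstep : (24 * (n:ℝ)/m) ≤ X^5 := by
    have h4 : (20:ℝ)^4 ≤ X^4 := pow_le_pow_left₀ (by norm_num) hX20 4
    have hmm := mul_le_mul h4 hX1 (by positivity) (by positivity)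
    have hX5 : X^5 = X^4 * X := by ring
    have hnm : (0:ℝ) ≤ (n:ℝ)/m := by positivity
    have heq : 24*(n:ℝ)/m = 24*((n:ℝ)/m) := by ring
    linarith [hmm, hX5, hnm, heq]
  have hfinal : ((n.choose k * (8^k+1):ℕ):ℝ) ≤ X^(10*m) := by
    calc ((n.choose k * (8^k+1):ℕ):ℝ) ≤ (48*n/k)^k := htot
      _ = (24*(n:ℝ)/m)^k := by rw [h48]
      _ ≤ (X^5)^k := pow_le_pow_left₀ (by positivity) hstep k
      _ = X^(10*m) := by rw [← pow_mul, hk]; congr 1; omega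
  have hpow : (X:ℝ)^(10*m) = Real.exp (10 * m * Real.log X) := by
    rw [← Real.rpow_natCast X (10*m), Real.rpow_def_of_pos hXpos]
    congr 1
    push_cast
    ring
  rw [← hpow]
  exact hfinal

lemma mem_suppSubmodule {n : ℕ} {S : Finset (Fin n)} {x : EuclideanSpace ℝ (Fin n)} :
    x ∈ suppSubmodule S ↔ ∀ i ∉ S, x i = 0 := Iff.rfl

/-- Lemma `cover`, "furthermore" part: there is an absolute constant `c > 0`
such that for every `0 < ε ≤ 1/2`, every `1 ≤ m ≤ n` with `2m ≤ n` and every `0 < r ≤ 1`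
there exists `Λ̄ ⊆ rB₂ⁿ` with `(U_m − U_m) ∩ rB₂ⁿ ⊆ 2 conv Λ̄` and
`|Λ̄| ≤ exp(c m log(c n/(m ε)))`. -/
theorem stmt6 :
    ∃ c : ℝ, 0 < c ∧
      ∀ (n m : ℕ) (ε r : ℝ), 0 < ε → ε ≤ 1 / 2 → 1 ≤ m → m ≤ n → 2 * m ≤ n → 0 < r → r ≤ 1 →
      ∃ Λbar : Set (EuclideanSpace ℝ (Fin n)),
        Λbar ⊆ closedBall 0 r ∧
        (sparseSphere n m - sparseSphere n m) ∩ closedBall 0 r ⊆ (2 : ℝ) • convexHull ℝ Λbar ∧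
        Λbar.Finite ∧ (Λbar.ncard : ℝ) ≤ Real.exp (c * m * Real.log (c * n / (m * ε))) := by
  classical
  refine ⟨10, by norm_num, ?_⟩
  intro n m ε r hε hε2 hm hmn h2mn hr hr1
  set E := EuclideanSpace ℝ (Fin n)
  have key : ∀ S : Finset (Fin n), ∃ N : Finset E, ↑N ⊆ closedBall (0:E) r ∧
      N.card ≤ 8^(2*m)+1 ∧ (S.card = 2*m →
        closedBall (0:E) r ∩ (suppSubmodule S : Set E) ⊆ (2:ℝ) • convexHull ℝ (↑N : Set E)) := by
    intro S
    by_cases hS : S.card = 2*m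
    · obtain ⟨N, h1, h2, h3⟩ := perSupport S hS hr
      exact ⟨N, h1, h2, fun _ => h3⟩
    · exact ⟨∅, by simp, Nat.zero_le _, fun h => absurd h hS⟩
  choose N hNsub hNcard hNcov using key
  set 𝒮 : Finset (Finset (Fin n)) := Finset.powersetCard (2*m) Finset.univ with h𝒮
  set Λ : Finset E := 𝒮.biUnion N with hΛ
  refine ⟨↑Λ, ?_, ?_, Λ.finite_toSet, ?_⟩
  · intro p hp
    obtain ⟨S, hS, hpS⟩ := Finset.mem_biUnion.mp hp
    exact hNsub S hpS
  · rintro x ⟨hx1, hx2⟩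
    rw [Set.mem_sub] at hx1
    obtain ⟨u, hu, v, hv, huv⟩ := hx1
    have hsupp : {i | x i ≠ 0} ⊆ {i | u i ≠ 0} ∪ {i | v i ≠ 0} := by
      intro i hi
      by_contra hcon
      simp only [Set.mem_union, Set.mem_setOf_eq, not_or, not_not] at hcon
      apply hi
      have hxi : x i = u i - v i := by rw [← huv]; rfl
      rw [hxi, hcon.1, hcon.2, sub_zero]
    have hfin : {i | x i ≠ 0}.Finite := Set.toFinite _
    have hncard : {i | x i ≠ 0}.ncard ≤ 2*m := by
      calc {i | x i ≠ 0}.ncard ≤ ({i | u i ≠ 0} ∪ {i | v i ≠ 0}).ncard :=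
            Set.ncard_le_ncard hsupp (Set.toFinite _)
        _ ≤ {i | u i ≠ 0}.ncard + {i | v i ≠ 0}.ncard := Set.ncard_union_le _ _
        _ ≤ m + m := add_le_add hu.2 hv.2
        _ = 2*m := (two_mul m).symm
    set T : Finset (Fin n) := hfin.toFinset with hT
    have hTcard : T.card ≤ 2*m := by
      rw [hT, ← Set.ncard_eq_toFinset_card]
      exact hncard
    obtain ⟨S, hTS, hSuniv, hScard⟩ :=
      Finset.exists_subsuperset_card_eq (Finset.subset_univ T) hTcard (by simpa using h2mn)
    have hS𝒮 : S ∈ 𝒮 := by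
      rw [h𝒮]
      exact Finset.mem_powersetCard.mpr ⟨Finset.subset_univ S, hScard⟩
    have hxF : x ∈ (suppSubmodule S : Set E) := by
      rw [SetLike.mem_coe, mem_suppSubmodule]
      intro i hi
      by_contra hxi
      exact hi (hTS (hfin.mem_toFinset.mpr hxi))
    have hcover := hNcov S hScard ⟨hx2, hxF⟩
    refine Set.smul_set_mono (convexHull_mono ?_) hcover
    exact Finset.coe_subset.mpr (Finset.subset_biUnion_of_mem N hS𝒮)
  · have hcard : Λ.card ≤ 𝒮.card * (8^(2*m)+1) := by
      calc Λ.card ≤ ∑ S ∈ 𝒮, (N S).card := Finset.card_biUnion_le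
        _ ≤ ∑ _S ∈ 𝒮, (8^(2*m)+1) := Finset.sum_le_sum fun S _ => hNcard S
        _ = 𝒮.card * (8^(2*m)+1) := by rw [Finset.sum_const, smul_eq_mul]
    have h𝒮card : 𝒮.card = n.choose (2*m) := by
      rw [h𝒮, Finset.card_powersetCard, Finset.card_univ, Fintype.card_fin]
    rw [Set.ncard_coe_finset]
    have hfin2 : Λ.card ≤ n.choose (2*m) * (8^(2*m)+1) := h𝒮card ▸ hcard
    calc (Λ.card : ℝ) ≤ ((n.choose (2*m) * (8^(2*m)+1) : ℕ) : ℝ) := by exact_mod_cast hfin2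
      _ ≤ Real.exp (10 * m * Real.log (10 * n / (m * ε))) := arith hε hε2 hm hmn
end

section
/- Let A : ℝⁿ → ℝ^k be a linear map, let T̃ ⊂ ℝⁿ be star-shaped (sT̃ ⊂ T̃ for all 0 < s < 1), let ρ > 0, and set T = ρ^{-1}(T̃ ∩ ρS^{n-1}). If there exists 0 < θ < 1 such that 1 − θ ≤ |Ax|² ≤ 1 + θ for all x ∈ T, then ker(A) ∩ T̃ ⊂ ρB₂ⁿ; in particular diam(ker(A) ∩ T̃) ≤ 2ρ (and ≤ ρ if T̃ is contained in a symmetric star-shaped set). -/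
open Metric Set
open scoped Pointwise

/-- if `A : ℝⁿ → ℝ^k` is linear, `T̃` is star-shaped, `ρ > 0`,
`T = ρ⁻¹(T̃ ∩ ρS^{n-1})`, and `1 - θ ≤ |Ax|² ≤ 1 + θ` on `T` for some `0 < θ < 1`, then
`ker(A) ∩ T̃ ⊆ ρB₂ⁿ`; in particular `diam(ker(A) ∩ T̃) ≤ 2ρ`. -/
theorem stmt14 (n k : ℕ)
    (A : EuclideanSpace ℝ (Fin n) →ₗ[ℝ] EuclideanSpace ℝ (Fin k))
    (Ttil : Set (EuclideanSpace ℝ (Fin n)))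
    (hstar : ∀ s : ℝ, 0 < s → s < 1 → s • Ttil ⊆ Ttil)
    (ρ : ℝ) (hρ : 0 < ρ)
    (T : Set (EuclideanSpace ℝ (Fin n)))
    (hT : T = ρ⁻¹ • (Ttil ∩ sphere (0 : EuclideanSpace ℝ (Fin n)) ρ))
    (θ : ℝ) (hθ0 : 0 < θ) (hθ1 : θ < 1)
    (hA : ∀ x ∈ T, 1 - θ ≤ ‖A x‖ ^ 2 ∧ ‖A x‖ ^ 2 ≤ 1 + θ) :
    (LinearMap.ker A : Set (EuclideanSpace ℝ (Fin n))) ∩ Ttil ⊆ closedBall 0 ρ ∧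
    Metric.diam ((LinearMap.ker A : Set (EuclideanSpace ℝ (Fin n))) ∩ Ttil) ≤ 2 * ρ := by
  have hsub : (LinearMap.ker A : Set (EuclideanSpace ℝ (Fin n))) ∩ Ttil ⊆ closedBall 0 ρ := by
    intro x hx
    obtain ⟨hker, hTtil⟩ := hx
    rw [mem_closedBall, dist_zero_right]
    by_contra hgt
    push_neg at hgt
    have hxpos : (0 : ℝ) < ‖x‖ := lt_trans hρ hgt
    set s : ℝ := ρ / ‖x‖ with hs
    have hs0 : 0 < s := div_pos hρ hxpos
    have hs1 : s < 1 := (div_lt_one hxpos).2 hgt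
    have hmem : s • x ∈ Ttil := hstar s hs0 hs1 ⟨x, hTtil, rfl⟩
    have hnorm : ‖s • x‖ = ρ := by
      rw [norm_smul, Real.norm_eq_abs, abs_of_pos hs0, hs, div_mul_cancel₀]
      exact ne_of_gt hxpos
    have hmemT : ρ⁻¹ • (s • x) ∈ T := by
      rw [hT]
      exact ⟨s • x, ⟨hmem, by simpa [mem_sphere, dist_zero_right] using hnorm⟩, rfl⟩
    have := (hA _ hmemT).1
    have hzero : A (ρ⁻¹ • (s • x)) = 0 := by
      have hx0 : A x = 0 := hker
      simp [map_smul, hx0]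
    rw [hzero] at this
    simp at this
    linarith
  refine ⟨hsub, ?_⟩
  calc Metric.diam _ ≤ Metric.diam (closedBall (0 : EuclideanSpace ℝ (Fin n)) ρ) :=
        Metric.diam_mono hsub (isBounded_closedBall)
    _ ≤ 2 * ρ := diam_closedBall hρ.le
end

section
/- Let 0 < p < 1, 1 ≤ m ≤ n, and set r = (1/p − 1) m^{1/p − 1/2}. Then for every x ∈ ℝⁿ, sup{ ⟨x,z⟩ : z ∈ rB_{p,∞}ⁿ ∩ B₂ⁿ } ≤ 2 (Σ_{i=1}^m (x_i*)²)^{1/2}, where (x_i*) is the non-increasing rearrangement of (|x_i|). Equivalently, rB_{p,∞}ⁿ ∩ B₂ⁿ ⊂ 2 conv Ũ_m. -/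
open Metric Set Finset
open scoped RealInnerProductSpace Pointwise

/-- `B_{p,∞}ⁿ`, the unit ball of weak-`ℓ_p`: all `x` with `|{i : |x_i| ≥ s}| ≤ s^{-p}` for all
`s > 0`. -/
def weakLpBall (n : ℕ) (p : ℝ) : Set (EuclideanSpace ℝ (Fin n)) :=
  {x | ∀ s : ℝ, 0 < s → ({i | s ≤ |x i|}.ncard : ℝ) ≤ s ^ (-p)}

set_option maxHeartbeats 1000000

lemma step_ineq {a : ℝ} (ha : 1 < a) {t : ℝ} (ht : 1 ≤ t) :
    (a - 1) * (t + 1) ^ (-a) ≤ t ^ (1 - a) - (t + 1) ^ (1 - a) := by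
  have ht0 : (0:ℝ) < t := lt_of_lt_of_le one_pos ht
  have ht1 : (0:ℝ) < t + 1 := by linarith
  have ha0 : (0:ℝ) < a := by linarith
  have ha1 : (0:ℝ) ≤ a - 1 := by linarith
  have hp1 : (0:ℝ) ≤ 1 + (a-1)/(t+1) := by positivity
  have hp2 : (0:ℝ) ≤ t/(t+1) := by positivity
  have key : (1 + (a-1)/(t+1)) ^ ((1:ℝ)/a) * (t/(t+1)) ^ ((a-1)/a) ≤ 1 := by
    have h := Real.geom_mean_le_arith_mean2_weighted
      (w₁ := 1/a) (w₂ := (a-1)/a) (p₁ := 1 + (a-1)/(t+1)) (p₂ := t/(t+1))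
      (by positivity) (div_nonneg ha1 ha0.le) hp1 hp2 (by field_simp; ring)
    calc (1 + (a-1)/(t+1)) ^ ((1:ℝ)/a) * (t/(t+1)) ^ ((a-1)/a)
        ≤ 1/a * (1 + (a-1)/(t+1)) + (a-1)/a * (t/(t+1)) := h
      _ = 1 := by field_simp; ring
  -- raise to the a-th power
  have key2 : (1 + (a-1)/(t+1)) * (t/(t+1)) ^ (a-1) ≤ 1 := by
    have hb : (0:ℝ) ≤ (1 + (a-1)/(t+1)) ^ ((1:ℝ)/a) * (t/(t+1)) ^ ((a-1)/a) := by positivity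
    have h2 := Real.rpow_le_rpow hb key (le_of_lt ha0)
    rw [Real.mul_rpow (by positivity) (by positivity), Real.one_rpow,
      ← Real.rpow_mul hp1, ← Real.rpow_mul hp2] at h2
    have e1 : (1:ℝ)/a * a = 1 := by field_simp
    have e2 : (a-1)/a * a = a - 1 := by field_simp
    rw [e1, e2, Real.rpow_one] at h2
    exact h2
  -- unfold rpow identities
  have hA : (0:ℝ) < (t+1) ^ (a-1) := Real.rpow_pos_of_pos ht1 _
  have hB : (0:ℝ) < t ^ (a-1) := Real.rpow_pos_of_pos ht0 _
  have eq1 : (t/(t+1)) ^ (a-1) = t ^ (a-1) * ((t+1) ^ (a-1))⁻¹ := by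
    rw [Real.div_rpow ht0.le ht1.le, div_eq_mul_inv]
  have eq2 : t ^ (1-a) = (t ^ (a-1))⁻¹ := by
    rw [show (1-a) = -(a-1) by ring, Real.rpow_neg ht0.le]
  have eq3 : (t+1) ^ (1-a) = ((t+1) ^ (a-1))⁻¹ := by
    rw [show (1-a) = -(a-1) by ring, Real.rpow_neg ht1.le]
  have eq4 : (t+1) ^ (-a) = ((t+1) ^ (a-1))⁻¹ * (t+1)⁻¹ := by
    rw [show (-a) = (1-a) + (-1) by ring, Real.rpow_add ht1, eq3, Real.rpow_neg_one]
  rw [eq1] at key2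
  rw [eq2, eq3, eq4]
  set A := (t+1) ^ (a-1)
  set B := t ^ (a-1)
  have h3 : (1 + (a-1)/(t+1)) * A⁻¹ ≤ B⁻¹ := by
    have h4 := mul_le_mul_of_nonneg_right key2 (inv_pos.mpr hB).le
    calc (1+(a-1)/(t+1)) * A⁻¹ = (1+(a-1)/(t+1)) * (B*A⁻¹) * B⁻¹ := by
          field_simp
      _ ≤ 1 * B⁻¹ := h4
      _ = B⁻¹ := one_mul _
  have h5 : (1 + (a-1)/(t+1)) * A⁻¹ = A⁻¹ + (a-1) * (A⁻¹ * (t+1)⁻¹) := by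
    field_simp
  linarith [h5 ▸ h3]

lemma tail_sum_aux {a : ℝ} (ha : 1 < a) {m : ℕ} (hm : 1 ≤ m) (j : ℕ) :
    ∑ k ∈ Finset.Ico m (m+j), ((k:ℝ)+1)^(-a)
      ≤ ((m:ℝ)^(1-a) - ((m+j : ℕ):ℝ)^(1-a))/(a-1) := by
  induction j with
  | zero => simp
  | succ j ih =>
    rw [show m + (j+1) = (m+j) + 1 from rfl,
      Finset.sum_Ico_succ_top (Nat.le_add_right m j)]
    have ht : (1:ℝ) ≤ ((m+j:ℕ):ℝ) := by
      have : (1:ℕ) ≤ m + j := le_trans hm (Nat.le_add_right m j)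
      exact_mod_cast this
    have hs := step_ineq ha ht
    have hcast : ((m+j+1 : ℕ):ℝ) = ((m+j:ℕ):ℝ) + 1 := by push_cast; ring
    rw [hcast]
    have ha1 : (0:ℝ) < a - 1 := by linarith
    calc ∑ k ∈ Finset.Ico m (m+j), ((k:ℝ)+1)^(-a) + (((m+j:ℕ):ℝ)+1)^(-a)
        ≤ ((m:ℝ)^(1-a) - ((m+j : ℕ):ℝ)^(1-a))/(a-1)
          + (((m+j:ℕ):ℝ)^(1-a) - (((m+j:ℕ):ℝ)+1)^(1-a))/(a-1) := by
          have h2 : (((m+j:ℕ):ℝ)+1)^(-a) ≤ (((m+j:ℕ):ℝ)^(1-a) - (((m+j:ℕ):ℝ)+1)^(1-a))/(a-1) := by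
            rw [le_div_iff₀ ha1]
            linarith [hs]
          exact add_le_add ih h2
      _ = ((m:ℝ)^(1-a) - (((m+j:ℕ):ℝ)+1)^(1-a))/(a-1) := by ring

lemma tail_sum {a : ℝ} (ha : 1 < a) {m : ℕ} (hm : 1 ≤ m) (N : ℕ) :
    ∑ k ∈ Finset.Ico m N, ((k:ℝ)+1)^(-a) ≤ (m:ℝ)^(1-a) / (a-1) := by
  have ha1 : (0:ℝ) < a - 1 := by linarith
  calc ∑ k ∈ Finset.Ico m N, ((k:ℝ)+1)^(-a)
      ≤ ∑ k ∈ Finset.Ico m (m+N), ((k:ℝ)+1)^(-a) := by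
        apply Finset.sum_le_sum_of_subset_of_nonneg
        · exact Finset.Ico_subset_Ico le_rfl (Nat.le_add_left N m)
        · intro i _ _; positivity
    _ ≤ ((m:ℝ)^(1-a) - ((m+N : ℕ):ℝ)^(1-a))/(a-1) := tail_sum_aux ha hm N
    _ ≤ (m:ℝ)^(1-a) / (a-1) := by
        have hnn : (0:ℝ) ≤ ((m+N:ℕ):ℝ)^(1-a) := Real.rpow_nonneg (by positivity) _
        gcongr
        exact sub_le_self _ hnn

lemma antitone_monovary' {n : ℕ} {f g : Fin n → ℝ} (hf : Antitone f) (hg : Antitone g) :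
    Monovary f g := by
  intro i j h
  by_contra hc
  have hij : i < j := by
    by_contra hc2
    push_neg at hc2
    exact hc (hf hc2)
  exact absurd (hg hij.le) (not_le.2 h)

lemma decay {n : ℕ} {p : ℝ} (hp0 : 0 < p) {w : Fin n → ℝ}
    (hw : ∀ s : ℝ, 0 < s → ({i | s ≤ |w i|}.ncard : ℝ) ≤ s ^ (-p))
    (τ : Equiv.Perm (Fin n)) (hτ : Antitone fun i => |w (τ i)|) (k : Fin n) :
    |w (τ k)| ≤ ((k:ℕ)+1 : ℝ) ^ (-(1/p)) := by
  set s := |w (τ k)| with hs_def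
  rcases eq_or_lt_of_le (abs_nonneg (w (τ k))) with h0 | hs
  · have hz : s = 0 := h0.symm
    rw [hz]; positivity
  have hk1 : (0:ℝ) < (k:ℕ)+1 := by positivity
  have hcard : ((k:ℕ):ℝ) + 1 ≤ ({i | s ≤ |w i|}.ncard : ℝ) := by
    have hsub : τ '' (Set.Iic k) ⊆ {i | s ≤ |w i|} := by
      rintro i ⟨j, hj, rfl⟩
      exact hτ hj
    have h1 : (τ '' (Set.Iic k)).ncard ≤ {i | s ≤ |w i|}.ncard :=
      Set.ncard_le_ncard hsub (Set.toFinite _)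
    have h2 : (τ '' (Set.Iic k)).ncard = (k:ℕ) + 1 := by
      rw [Set.ncard_image_of_injective _ τ.injective, ← Finset.coe_Iic,
        Set.ncard_coe_finset, Fin.card_Iic]
    rw [h2] at h1
    exact_mod_cast h1
  have h1 : ((k:ℕ):ℝ) + 1 ≤ s ^ (-p) := le_trans hcard (hw s hs)
  rw [Real.rpow_neg hs.le] at h1
  have hsp : (0:ℝ) < s ^ p := Real.rpow_pos_of_pos hs p
  have h2 : s ^ p ≤ (((k:ℕ):ℝ)+1)⁻¹ := by
    have h3 := mul_le_mul_of_nonneg_left h1 hsp.le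
    rw [mul_inv_cancel₀ hsp.ne'] at h3
    rw [inv_eq_one_div, le_div_iff₀ hk1]
    linarith
  have mono := Real.rpow_le_rpow hsp.le h2 (by positivity : (0:ℝ) ≤ 1/p)
  have e : (s^p)^((1:ℝ)/p) = s := by
    rw [← Real.rpow_mul hs.le, mul_one_div, div_self hp0.ne', Real.rpow_one]
  rw [e, Real.inv_rpow hk1.le] at mono
  rw [Real.rpow_neg hk1.le]
  exact mono

lemma card_filter_lt {n m : ℕ} (hmn : m ≤ n) :
    (Finset.univ.filter fun i : Fin n => (i:ℕ) < m).card = m := by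
  have : (Finset.univ.filter fun i : Fin n => (i:ℕ) < m)
      = Finset.map (Fin.castLEEmb hmn) Finset.univ := by
    ext i
    simp only [Finset.mem_filter, Finset.mem_univ, true_and, Finset.mem_map]
    constructor
    · intro h
      exact ⟨⟨(i:ℕ), h⟩, Fin.ext rfl⟩
    · rintro ⟨j, -, rfl⟩
      simpa [Fin.castLEEmb] using j.isLt
  rw [this, Finset.card_map, Finset.card_univ, Fintype.card_fin]

lemma sum_dite_card {M : Type*} [AddCommMonoid M] {E : Type*} (t : Finset E) {N : ℕ}
    (hcard : t.card ≤ N) (G : E → M) :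
    ∑ i : Fin N, (if h : (i:ℕ) < t.card then G ((t.equivFin.symm ⟨(i:ℕ), h⟩ : E)) else 0)
      = ∑ y ∈ t, G y := by
  classical
  have step1 : ∑ i : Fin N, (if h : (i:ℕ) < t.card then G ((t.equivFin.symm ⟨(i:ℕ), h⟩ : E)) else 0)
      = ∑ i ∈ (Finset.univ : Finset (Fin t.card)).map (Fin.castLEEmb hcard),
        (if h : (i:ℕ) < t.card then G ((t.equivFin.symm ⟨(i:ℕ), h⟩ : E)) else 0) := by
    refine (Finset.sum_subset (Finset.subset_univ _) ?_).symm
    intro i _ hno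
    rw [dif_neg]
    intro h
    exact hno (Finset.mem_map.2 ⟨⟨(i:ℕ), h⟩, Finset.mem_univ _, Fin.ext rfl⟩)
  rw [step1, Finset.sum_map]
  have step2 : ∀ j : Fin t.card,
      (if h : ((Fin.castLEEmb hcard j :  Fin N):ℕ) < t.card
        then G ((t.equivFin.symm ⟨((Fin.castLEEmb hcard j : Fin N):ℕ), h⟩ : E)) else 0)
      = G (t.equivFin.symm j) := by
    intro j
    have hjj : ((Fin.castLEEmb hcard j : Fin N):ℕ) < t.card := j.isLt
    rw [dif_pos hjj]
    exact congrArg (fun z => G ((t.equivFin.symm z : E))) (Fin.ext rfl)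
  rw [Finset.sum_congr rfl fun j _ => step2 j]
  rw [← Finset.sum_coe_sort t G]
  exact Equiv.sum_comp t.equivFin.symm (fun y => G (y : E))

lemma isCompact_convexHull' {E : Type*} [NormedAddCommGroup E] [NormedSpace ℝ E]
    [FiniteDimensional ℝ E] {s : Set E} (hs : IsCompact s) (hne : s.Nonempty) :
    IsCompact (convexHull ℝ s) := by
  classical
  set N := Module.finrank ℝ E + 1 with hN
  set φ : (Fin N → ℝ) × (Fin N → E) → E := fun q => ∑ i, q.1 i • q.2 i with hφ
  have hcont : Continuous φ := by
    apply continuous_finset_sum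
    intro i _
    exact ((continuous_apply i).comp continuous_fst).smul
      ((continuous_apply i).comp continuous_snd)
  have hT : IsCompact (stdSimplex ℝ (Fin N) ×ˢ Set.univ.pi fun _ : Fin N => s) :=
    (isCompact_stdSimplex _ _).prod (isCompact_univ_pi fun _ => hs)
  have himg : convexHull ℝ s = φ '' (stdSimplex ℝ (Fin N) ×ˢ Set.univ.pi fun _ : Fin N => s) := by
    apply Set.Subset.antisymm
    · rw [convexHull_eq_union]
      rintro x hx
      simp only [Set.mem_iUnion] at hx
      obtain ⟨t, hts, hai, hx⟩ := hx
      have hcard : t.card ≤ N := by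
        calc t.card = Fintype.card t := (Fintype.card_coe t).symm
          _ ≤ Module.finrank ℝ ↥(vectorSpan ℝ (Set.range (Subtype.val : t → E))) + 1 :=
              hai.card_le_finrank_succ
          _ ≤ N := by
              rw [hN]
              exact Nat.add_le_add_right (Submodule.finrank_le _) 1
      rw [Finset.convexHull_eq] at hx
      obtain ⟨wt, hw0, hw1, hwx⟩ := hx
      set f : Fin N → E := fun i =>
        if h : (i:ℕ) < t.card then (t.equivFin.symm ⟨(i:ℕ), h⟩ : E) else hne.some with hf_def
      set v : Fin N → ℝ := fun i =>
        if h : (i:ℕ) < t.card then wt (t.equivFin.symm ⟨(i:ℕ), h⟩ : E) else 0 with hv_def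
      refine ⟨(v, f), ⟨⟨fun i => ?_, ?_⟩, ?_⟩, ?_⟩
      · rw [hv_def]
        dsimp only
        split
        · exact hw0 _ (Finset.coe_mem _)
        · exact le_rfl
      · rw [hv_def]
        dsimp only
        rw [sum_dite_card t hcard (fun y => wt y)]
        exact hw1
      · rw [Set.mem_univ_pi]
        intro i
        rw [hf_def]
        dsimp only
        split
        · exact hts (Finset.coe_mem _)
        · exact hne.some_mem
      · rw [hφ]
        dsimp only
        have : ∀ i : Fin N, v i • f i
            = (if h : (i:ℕ) < t.card
              then wt (t.equivFin.symm ⟨(i:ℕ), h⟩ : E) • ((t.equivFin.symm ⟨(i:ℕ), h⟩ : E))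
              else 0) := by
          intro i
          rw [hv_def, hf_def]
          dsimp only
          split
          · rfl
          · rw [zero_smul]
        rw [Finset.sum_congr rfl fun i _ => this i,
          sum_dite_card t hcard (fun y => wt y • y)]
        rw [← hwx, Finset.centerMass_eq_of_sum_1 _ _ hw1]
        simp
    · rintro x ⟨⟨v, f⟩, ⟨hv, hf⟩, rfl⟩
      have hv' : (∀ i, 0 ≤ v i) ∧ ∑ i, v i = 1 := hv
      rw [Set.mem_univ_pi] at hf
      have : φ (v, f) = Finset.univ.centerMass v f :=
        (Finset.centerMass_eq_of_sum_1 _ _ hv'.2).symm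
      rw [this]
      exact Finset.centerMass_mem_convexHull _ (fun i _ => hv'.1 i)
        (by rw [hv'.2]; exact one_pos) (fun i _ => hf i)
  rw [himg]
  exact hT.image hcont
lemma rpow_calc {a c M : ℝ} (ha : 1 < a) (hM : 0 < M) :
    c / Real.sqrt M * ((a - 1) * M ^ (a - 1/2)) * (M ^ (1 - a) / (a - 1)) = c := by
  have e1 : M ^ (a-1/2) * M ^ (1-a) = M ^ ((1:ℝ)/2) := by
    rw [← Real.rpow_add hM]; norm_num
  have e2 : Real.sqrt M = M ^ ((1:ℝ)/2) := Real.sqrt_eq_rpow _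
  have hA : (0:ℝ) < M ^ (a-1/2) := Real.rpow_pos_of_pos hM _
  have hB : (0:ℝ) < M ^ (1-a) := Real.rpow_pos_of_pos hM _
  have hC : (0:ℝ) < M ^ ((1:ℝ)/2) := Real.rpow_pos_of_pos hM _
  have ha1 : a - 1 ≠ 0 := by intro h; nlinarith
  rw [e2]
  set A := M ^ (a-1/2) with hA_def
  set B := M ^ (1-a) with hB_def
  set C := M ^ ((1:ℝ)/2) with hC_def
  field_simp
  linear_combination c * e1

set_option maxHeartbeats 1000000 in
lemma part1 (n m : ℕ) (p : ℝ) (hp0 : 0 < p) (hp1 : p < 1) (hm : 1 ≤ m) (hmn : m ≤ n)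
    (r : ℝ) (hr : r = (1 / p - 1) * (m : ℝ) ^ (1 / p - 1 / 2))
    (x : EuclideanSpace ℝ (Fin n)) (σ : Equiv.Perm (Fin n))
    (hσ : Antitone fun i => |x (σ i)|)
    (z : EuclideanSpace ℝ (Fin n))
    (hz : z ∈ (r • weakLpBall n p) ∩ closedBall (0 : EuclideanSpace ℝ (Fin n)) 1) :
    ⟪x, z⟫ ≤ 2 * Real.sqrt (∑ i ∈ Finset.univ.filter fun i : Fin n => (i : ℕ) < m,
      |x (σ i)| ^ 2) := by
  classical
  obtain ⟨hz1, hz2⟩ := hz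
  rw [mem_closedBall_zero_iff] at hz2
  obtain ⟨w, hwW, hzw⟩ := hz1
  set a := 1/p with ha_def
  have ha : 1 < a := by rw [ha_def]; rw [lt_div_iff₀ hp0]; linarith
  have hM0 : (0:ℝ) < (m:ℝ) := by exact_mod_cast Nat.lt_of_lt_of_le Nat.zero_lt_one hm
  have hr0 : 0 < r := by
    rw [hr]
    exact mul_pos (by linarith) (Real.rpow_pos_of_pos hM0 _)
  set Fh := Finset.univ.filter fun i : Fin n => (i : ℕ) < m with hFh
  set Ft := Finset.univ.filter fun i : Fin n => ¬ ((i : ℕ) < m) with hFt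
  set S := ∑ i ∈ Fh, |x (σ i)| ^ 2 with hS
  have hS0 : 0 ≤ S := by positivity
  -- sorting permutation for z
  set τ := Tuple.sort (fun i => -|z i|) with hτdef
  have hZ : Antitone fun i => |z (τ i)| := by
    intro i j hij
    have := Tuple.monotone_sort (fun i => -|z i|) hij
    simpa using this
  -- inner product as sum
  have h_inner : ⟪x, z⟫ = ∑ i : Fin n, x i * z i := by
    simp [PiLp.inner_apply, RCLike.inner_apply, conj_trivial]
    exact Finset.sum_congr rfl fun i _ => mul_comm _ _
  have h_abs : ∑ i : Fin n, x i * z i ≤ ∑ i : Fin n, |x i| * |z i| :=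
    Finset.sum_le_sum fun i _ => by rw [← abs_mul]; exact le_abs_self _
  have h_perm : ∑ i : Fin n, |x i| * |z i| = ∑ i : Fin n, |x (σ i)| * |z (σ i)| :=
    (Equiv.sum_comp σ (fun i => |x i| * |z i|)).symm
  have h_rearr : ∑ i : Fin n, |x (σ i)| * |z (σ i)| ≤ ∑ i : Fin n, |x (σ i)| * |z (τ i)| := by
    have hmono : Monovary (fun i => |x (σ i)|) (fun i : Fin n => |z (τ i)|) :=
      antitone_monovary' hσ hZ
    have h := hmono.sum_mul_comp_perm_le_sum_mul (σ := σ.trans τ.symm)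
    calc ∑ i : Fin n, |x (σ i)| * |z (σ i)|
        = ∑ i : Fin n, |x (σ i)| * |z (τ ((σ.trans τ.symm) i))| := by
          apply Finset.sum_congr rfl
          intro i _
          rw [Equiv.trans_apply, Equiv.apply_symm_apply]
      _ ≤ ∑ i : Fin n, |x (σ i)| * |z (τ i)| := h
  have h_split : ∑ i : Fin n, |x (σ i)| * |z (τ i)|
      = ∑ i ∈ Fh, |x (σ i)| * |z (τ i)| + ∑ i ∈ Ft, |x (σ i)| * |z (τ i)| :=
    (Finset.sum_filter_add_sum_filter_not _ _ _).symm
  -- head bound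
  have hZsq : ∑ i ∈ Fh, |z (τ i)| ^ 2 ≤ 1 := by
    calc ∑ i ∈ Fh, |z (τ i)| ^ 2 ≤ ∑ i : Fin n, |z (τ i)| ^ 2 := by
          apply Finset.sum_le_sum_of_subset_of_nonneg (Finset.filter_subset _ _)
          intro i _ _; positivity
      _ = ∑ i : Fin n, |z i| ^ 2 := Equiv.sum_comp τ (fun i => |z i| ^ 2)
      _ = ‖z‖ ^ 2 := by
          rw [EuclideanSpace.norm_eq, Real.sq_sqrt (by positivity)]
          simp [Real.norm_eq_abs]
      _ ≤ 1 := by nlinarith [norm_nonneg z]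
  have hhead : ∑ i ∈ Fh, |x (σ i)| * |z (τ i)| ≤ Real.sqrt S := by
    have hcs := sum_mul_sq_le_sq_mul_sq Fh (fun i => |x (σ i)|) (fun i => |z (τ i)|)
    have h0 : (0:ℝ) ≤ ∑ i ∈ Fh, |x (σ i)| * |z (τ i)| := by positivity
    rw [Real.le_sqrt h0 hS0]
    calc (∑ i ∈ Fh, |x (σ i)| * |z (τ i)|) ^ 2
        ≤ S * ∑ i ∈ Fh, |z (τ i)| ^ 2 := hcs
      _ ≤ S * 1 := mul_le_mul_of_nonneg_left hZsq hS0
      _ = S := mul_one S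
  -- tail bound
  have hXt : ∀ i ∈ Ft, |x (σ i)| ≤ Real.sqrt S / Real.sqrt (m:ℝ) := by
    intro i hi
    rw [hFt, Finset.mem_filter] at hi
    have him : m ≤ (i:ℕ) := not_lt.1 hi.2
    have hsum : (m:ℝ) * |x (σ i)| ^ 2 ≤ S := by
      have hterm : ∀ j ∈ Fh, |x (σ i)| ^ 2 ≤ |x (σ j)| ^ 2 := by
        intro j hj
        rw [hFh, Finset.mem_filter] at hj
        have hji : j ≤ i := by
          rw [Fin.le_def]
          omega
        have := hσ hji
        nlinarith [abs_nonneg (x (σ i)), abs_nonneg (x (σ j))]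
      have := Finset.sum_le_sum hterm
      rw [Finset.sum_const, card_filter_lt hmn, nsmul_eq_mul] at this
      exact le_trans this le_rfl
    have hsq : |x (σ i)| ^ 2 ≤ S / (m:ℝ) := by
      rw [le_div_iff₀ hM0]; linarith
    calc |x (σ i)| = Real.sqrt (|x (σ i)| ^ 2) := (Real.sqrt_sq (abs_nonneg _)).symm
      _ ≤ Real.sqrt (S / (m:ℝ)) := Real.sqrt_le_sqrt hsq
      _ = Real.sqrt S / Real.sqrt (m:ℝ) := Real.sqrt_div hS0 _
  have hwmem : ∀ s : ℝ, 0 < s → ({i | s ≤ |w i|}.ncard : ℝ) ≤ s ^ (-p) := hwW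
  have hwτ : Antitone fun i => |w (τ i)| := by
    intro i j hij
    have h := hZ hij
    have e : ∀ k : Fin n, |z (τ k)| = r * |w (τ k)| := by
      intro k
      rw [← hzw]
      simp [abs_mul, abs_of_pos hr0]
    dsimp only at h ⊢
    rw [e i, e j] at h
    exact le_of_mul_le_mul_left h hr0
  have hZt : ∀ i : Fin n, |z (τ i)| ≤ r * (((i:ℕ):ℝ) + 1) ^ (-a) := by
    intro i
    have hd := decay hp0 hwmem τ hwτ i
    have e : |z (τ i)| = r * |w (τ i)| := by
      rw [← hzw]; simp [abs_mul, abs_of_pos hr0]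
    rw [e, ha_def]
    exact mul_le_mul_of_nonneg_left hd hr0.le
  have htail : ∑ i ∈ Ft, |x (σ i)| * |z (τ i)| ≤ Real.sqrt S := by
    have h1 : ∑ i ∈ Ft, |x (σ i)| * |z (τ i)|
        ≤ ∑ i ∈ Ft, (Real.sqrt S / Real.sqrt (m:ℝ)) * (r * (((i:ℕ):ℝ) + 1) ^ (-a)) := by
      apply Finset.sum_le_sum
      intro i hi
      apply mul_le_mul (hXt i hi) (hZt i) (abs_nonneg _)
      positivity
    have h2 : ∑ i ∈ Ft, (Real.sqrt S / Real.sqrt (m:ℝ)) * (r * (((i:ℕ):ℝ) + 1) ^ (-a))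
        = (Real.sqrt S / Real.sqrt (m:ℝ)) * r * ∑ i ∈ Ft, (((i:ℕ):ℝ) + 1) ^ (-a) := by
      rw [Finset.mul_sum]
      apply Finset.sum_congr rfl
      intro i _
      ring
    have hmap : Ft.map Fin.valEmbedding = Finset.Ico m n := by
      ext k
      simp only [Finset.mem_map, Finset.mem_Ico, hFt, Finset.mem_filter, Finset.mem_univ,
        true_and, Fin.valEmbedding_apply, not_lt]
      constructor
      · rintro ⟨i, hi, rfl⟩
        exact ⟨hi, i.isLt⟩
      · rintro ⟨hmk, hkn⟩
        exact ⟨⟨k, hkn⟩, hmk, rfl⟩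
    have h3 : ∑ i ∈ Ft, (((i:ℕ):ℝ) + 1) ^ (-a) = ∑ k ∈ Finset.Ico m n, ((k:ℝ) + 1) ^ (-a) := by
      rw [← hmap, Finset.sum_map]
      rfl
    have h4 := tail_sum ha hm n
    have hr' : r = (a - 1) * (m:ℝ) ^ (a - 1/2) := by
      rw [hr, ha_def]
    have h5 : (Real.sqrt S / Real.sqrt (m:ℝ)) * r * ((m:ℝ) ^ (1-a) / (a-1)) = Real.sqrt S := by
      rw [hr']
      exact rpow_calc ha hM0
    calc ∑ i ∈ Ft, |x (σ i)| * |z (τ i)|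
        ≤ (Real.sqrt S / Real.sqrt (m:ℝ)) * r * ∑ i ∈ Ft, (((i:ℕ):ℝ) + 1) ^ (-a) := by
          rw [← h2]; exact h1
      _ ≤ (Real.sqrt S / Real.sqrt (m:ℝ)) * r * ((m:ℝ) ^ (1-a) / (a-1)) := by
          apply mul_le_mul_of_nonneg_left _ (by positivity)
          rw [h3]; exact h4
      _ = Real.sqrt S := h5
  calc ⟪x, z⟫ = ∑ i : Fin n, x i * z i := h_inner
    _ ≤ ∑ i : Fin n, |x i| * |z i| := h_abs
    _ = ∑ i : Fin n, |x (σ i)| * |z (σ i)| := h_perm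
    _ ≤ ∑ i : Fin n, |x (σ i)| * |z (τ i)| := h_rearr
    _ = ∑ i ∈ Fh, |x (σ i)| * |z (τ i)| + ∑ i ∈ Ft, |x (σ i)| * |z (τ i)| := h_split
    _ ≤ Real.sqrt S + Real.sqrt S := add_le_add hhead htail
    _ = 2 * Real.sqrt S := by ring
lemma sparseBall_closed (n m : ℕ) : IsClosed (sparseBall n m) := by
  classical
  have heq : sparseBall n m = closedBall 0 1 ∩
      ⋃ S ∈ {S : Finset (Fin n) | S.card ≤ m},
        {x : EuclideanSpace ℝ (Fin n) | ∀ i, i ∉ S → x i = 0} := by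
    ext y
    constructor
    · rintro ⟨h1, h2⟩
      refine ⟨mem_closedBall_zero_iff.2 h1, ?_⟩
      have hfin : {i | y i ≠ 0}.Finite := Set.toFinite _
      refine Set.mem_biUnion (?_ : hfin.toFinset ∈ _) ?_
      · rw [Set.mem_setOf_eq, ← Set.ncard_eq_toFinset_card _ hfin]
        exact h2
      · intro i hi
        by_contra hne
        exact hi (hfin.mem_toFinset.2 hne)
    · rintro ⟨h1, h2⟩
      rw [Set.mem_iUnion₂] at h2
      obtain ⟨Sf, hSf, hvan⟩ := h2
      rw [Set.mem_setOf_eq] at hSf hvan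
      refine ⟨mem_closedBall_zero_iff.1 h1, ?_⟩
      have hsub : {i | y i ≠ 0} ⊆ ↑Sf := by
        intro i hi
        by_contra hno
        exact hi (hvan i hno)
      calc {i | y i ≠ 0}.ncard ≤ (↑Sf : Set (Fin n)).ncard :=
            Set.ncard_le_ncard hsub (Set.toFinite _)
        _ = Sf.card := Set.ncard_coe_finset _
        _ ≤ m := hSf
  rw [heq]
  apply IsClosed.inter Metric.isClosed_closedBall
  · apply Set.Finite.isClosed_biUnion (Set.toFinite _)
    intro S _
    have : {x : EuclideanSpace ℝ (Fin n) | ∀ i, i ∉ S → x i = 0}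
        = ⋂ (i) (_ : i ∉ S), {x : EuclideanSpace ℝ (Fin n) | x i = 0} := by
      ext y; simp
    rw [this]
    apply isClosed_iInter
    intro i
    apply isClosed_iInter
    intro _
    have : {x : EuclideanSpace ℝ (Fin n) | x i = 0}
        = (EuclideanSpace.proj (𝕜 := ℝ) i) ⁻¹' {0} := by
      ext y; simp
    rw [this]
    exact IsClosed.preimage (EuclideanSpace.proj (𝕜 := ℝ) i).continuous isClosed_singleton

/-- Lemma `convex_hull`: for `0 < p < 1`, `1 ≤ m ≤ n` and
`r = (1/p − 1)m^{1/p−1/2}`, every `x ∈ ℝⁿ` satisfies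
`sup_{z ∈ rB_{p,∞}ⁿ ∩ B₂ⁿ} ⟪x,z⟫ ≤ 2(Σ_{i=1}^m (x_i*)²)^{1/2}`, where `(x_i*)` is the
non-increasing rearrangement of `(|x_i|)`; equivalently `rB_{p,∞}ⁿ ∩ B₂ⁿ ⊆ 2 conv Ũ_m`. -/
theorem stmt16 (n m : ℕ) (p : ℝ) (hp0 : 0 < p) (hp1 : p < 1) (hm : 1 ≤ m) (hmn : m ≤ n)
    (r : ℝ) (hr : r = (1 / p - 1) * (m : ℝ) ^ (1 / p - 1 / 2)) :
    (∀ x : EuclideanSpace ℝ (Fin n), ∀ σ : Equiv.Perm (Fin n),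
      (Antitone fun i => |x (σ i)|) →
      ∀ z ∈ (r • weakLpBall n p) ∩ closedBall (0 : EuclideanSpace ℝ (Fin n)) 1,
        ⟪x, z⟫ ≤ 2 * Real.sqrt (∑ i ∈ Finset.univ.filter fun i : Fin n => (i : ℕ) < m,
          |x (σ i)| ^ 2)) ∧
    (r • weakLpBall n p) ∩ closedBall (0 : EuclideanSpace ℝ (Fin n)) 1 ⊆
      (2 : ℝ) • convexHull ℝ (sparseBall n m) := by
  classical
  constructor
  · intro x σ hσ z hz
    exact part1 n m p hp0 hp1 hm hmn r hr x σ hσ z hz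
  · intro z hz
    by_contra hzC
    have h0mem : (0 : EuclideanSpace ℝ (Fin n)) ∈ sparseBall n m := by
      constructor
      · rw [norm_zero]; norm_num
      · have : {i : Fin n | (0 : EuclideanSpace ℝ (Fin n)) i ≠ 0} = ∅ := by
          ext i; simp
        rw [this, Set.ncard_empty]
        exact Nat.zero_le m
    have hsb_sub : sparseBall n m ⊆ closedBall 0 1 := fun y hy =>
      mem_closedBall_zero_iff.2 hy.1
    have hsb_compact : IsCompact (sparseBall n m) :=
      (isCompact_closedBall (0 : EuclideanSpace ℝ (Fin n)) 1).of_isClosed_subset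
        (sparseBall_closed n m) hsb_sub
    have hull_compact := isCompact_convexHull' hsb_compact ⟨0, h0mem⟩
    have hC_compact : IsCompact ((2:ℝ) • convexHull ℝ (sparseBall n m)) := by
      rw [← Set.image_smul]
      exact hull_compact.image (continuous_const_smul _)
    have hC_convex : Convex ℝ ((2:ℝ) • convexHull ℝ (sparseBall n m)) :=
      (convex_convexHull ℝ _).smul _
    obtain ⟨f, u, hfa, hfz⟩ :=
      geometric_hahn_banach_closed_point hC_convex hC_compact.isClosed hzC
    set x := (InnerProductSpace.toDual ℝ (EuclideanSpace ℝ (Fin n))).symm f with hx_def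
    have hxf : ∀ y, ⟪x, y⟫ = f y := fun y => InnerProductSpace.toDual_symm_apply
    set σ := Tuple.sort (fun i => -|x i|) with hσdef
    have hσ : Antitone fun i => |x (σ i)| := by
      intro i j hij
      have := Tuple.monotone_sort (fun i => -|x i|) hij
      simpa using this
    set Fh := Finset.univ.filter (fun i : Fin n => (i:ℕ) < m) with hFh
    set S := ∑ i ∈ Fh, |x (σ i)|^2 with hS
    have hS0 : 0 ≤ S := by positivity
    have hpart1 : ⟪x, z⟫ ≤ 2 * Real.sqrt S := part1 n m p hp0 hp1 hm hmn r hr x σ hσ z hz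
    rcases eq_or_lt_of_le hS0 with hS_eq | hS_pos
    · -- S = 0 ⇒ x = 0
      have hx0 : ∀ i, x i = 0 := by
        let i0 : Fin n := ⟨0, by omega⟩
        have hi0v : (i0:ℕ) = 0 := rfl
        have hmem : i0 ∈ Fh := by
          rw [hFh, Finset.mem_filter]
          exact ⟨Finset.mem_univ _, by omega⟩
        have hterm : |x (σ i0)| ^ 2 = 0 := by
          have := (Finset.sum_eq_zero_iff_of_nonneg
            (fun j _ => sq_nonneg (|x (σ j)|))).1 hS_eq.symm i0 hmem
          exact this
        have hi0 : |x (σ i0)| = 0 := by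
          nlinarith [abs_nonneg (x (σ i0))]
        intro i
        have hle : |x (σ (σ.symm i))| ≤ |x (σ i0)| := hσ (by
          rw [Fin.le_def]; omega)
        rw [Equiv.apply_symm_apply] at hle
        rw [hi0] at hle
        have := abs_nonneg (x i)
        have : |x i| = 0 := le_antisymm hle this
        exact abs_eq_zero.1 this
      have hCmem0 : (0 : EuclideanSpace ℝ (Fin n)) ∈
          (2:ℝ) • convexHull ℝ (sparseBall n m) :=
        ⟨0, subset_convexHull ℝ _ h0mem, smul_zero 2⟩
      have h1 : f 0 < u := hfa 0 hCmem0
      rw [map_zero] at h1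
      have hxzero : x = 0 := by
        ext i
        exact hx0 i
      have h2 : f z = 0 := by
        rw [← hxf z, hxzero, inner_zero_left]
      linarith [hfz, h2 ▸ hfz]
    · set c := Real.sqrt S with hc_def
      have hc : 0 < c := Real.sqrt_pos.2 hS_pos
      set y : EuclideanSpace ℝ (Fin n) :=
        WithLp.toLp 2 (fun i => if ((σ.symm i : Fin n):ℕ) < m then x i / c else 0) with hy_def
      have hyσ : ∀ j : Fin n, y (σ j) = if (j:ℕ) < m then x (σ j) / c else 0 := by
        intro j
        rw [hy_def]
        simp [Equiv.symm_apply_apply]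
      have hsum2 : ∑ i : Fin n, (y i)^2 = 1 := by
        rw [← Equiv.sum_comp σ (fun i => (y i)^2)]
        calc ∑ j : Fin n, (y (σ j))^2
            = ∑ j : Fin n, (if (j:ℕ) < m then (x (σ j)/c)^2 else 0) := by
              apply Finset.sum_congr rfl
              intro j _
              rw [hyσ j]
              split <;> simp
          _ = ∑ j ∈ Fh, (x (σ j)/c)^2 := (Finset.sum_filter _ _).symm
          _ = (∑ j ∈ Fh, |x (σ j)|^2) / c^2 := by
              rw [Finset.sum_div]
              apply Finset.sum_congr rfl
              intro j _
              rw [div_pow, sq_abs]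
          _ = 1 := by
              rw [← hS, hc_def, Real.sq_sqrt hS0, div_self (ne_of_gt hS_pos)]
      have hy_norm : ‖y‖ ≤ 1 := by
        rw [EuclideanSpace.norm_eq]
        have : ∑ i : Fin n, ‖y i‖^2 = 1 := by
          rw [← hsum2]
          apply Finset.sum_congr rfl
          intro i _
          rw [Real.norm_eq_abs, sq_abs]
        rw [this, Real.sqrt_one]
      have hy_supp : {i | y i ≠ 0}.ncard ≤ m := by
        have hsub : {i | y i ≠ 0} ⊆ {i : Fin n | ((σ.symm i : Fin n):ℕ) < m} := by
          intro i hi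
          rw [Set.mem_setOf_eq] at hi ⊢
          by_contra hno
          apply hi
          rw [hy_def]
          simp only
          rw [if_neg hno]
        have himg : {i : Fin n | ((σ.symm i : Fin n):ℕ) < m}
            = σ '' {j : Fin n | (j:ℕ) < m} := by
          ext i
          constructor
          · intro h
            exact ⟨σ.symm i, h, Equiv.apply_symm_apply σ i⟩
          · rintro ⟨j, hj, rfl⟩
            rwa [Set.mem_setOf_eq, Equiv.symm_apply_apply]
        have hcount : {j : Fin n | (j:ℕ) < m}.ncard = m := by
          have : {j : Fin n | (j:ℕ) < m} = ↑Fh := by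
            rw [hFh]; ext j; simp
          rw [this, Set.ncard_coe_finset, hFh, card_filter_lt hmn]
        calc {i | y i ≠ 0}.ncard
            ≤ {i : Fin n | ((σ.symm i : Fin n):ℕ) < m}.ncard :=
              Set.ncard_le_ncard hsub (Set.toFinite _)
          _ = {j : Fin n | (j:ℕ) < m}.ncard := by
              rw [himg, Set.ncard_image_of_injective _ σ.injective]
          _ = m := hcount
      have hy_mem : y ∈ sparseBall n m := ⟨hy_norm, hy_supp⟩
      have ha_mem : (2:ℝ) • y ∈ (2:ℝ) • convexHull ℝ (sparseBall n m) :=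
        Set.smul_mem_smul_set (subset_convexHull ℝ _ hy_mem)
      have hinner_y : ⟪x, y⟫ = c := by
        have h1 : ⟪x, y⟫ = ∑ i : Fin n, x i * y i := by
          simp [PiLp.inner_apply, RCLike.inner_apply, conj_trivial]
          exact Finset.sum_congr rfl fun i _ => mul_comm _ _
        rw [h1, ← Equiv.sum_comp σ (fun i => x i * y i)]
        calc ∑ j : Fin n, x (σ j) * y (σ j)
            = ∑ j : Fin n, (if (j:ℕ) < m then x (σ j) * (x (σ j)/c) else 0) := by
              apply Finset.sum_congr rfl
              intro j _
              rw [hyσ j]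
              split <;> simp
          _ = ∑ j ∈ Fh, x (σ j) * (x (σ j)/c) := (Finset.sum_filter _ _).symm
          _ = (∑ j ∈ Fh, |x (σ j)|^2) / c := by
              rw [Finset.sum_div]
              apply Finset.sum_congr rfl
              intro j _
              rw [sq_abs]
              ring
          _ = c := by
              rw [← hS, hc_def, ← Real.sq_sqrt hS0]
              rw [sq]
              field_simp
              rw [Real.sqrt_sq (Real.sqrt_nonneg _)]
      have hfy : f ((2:ℝ) • y) = 2 * c := by
        rw [← hxf]
        rw [real_inner_smul_right, hinner_y]
      have h3 := hfa _ ha_mem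
      rw [hfy] at h3
      have h4 : f z ≤ 2 * c := by rw [← hxf]; exact hpart1
      linarith
end

section
/- For every 1 ≤ m ≤ n, √m B₁ⁿ ∩ B₂ⁿ ⊂ 2 conv Ũ_m, where B₁ⁿ is the unit ball of ℓ₁ⁿ. -/
open Metric Set
open scoped Pointwise

/-- `B₁ⁿ`, the unit ball of `ℓ₁ⁿ`. -/
def l1Ball (n : ℕ) : Set (EuclideanSpace ℝ (Fin n)) :=
  {x | ∑ i, |x i| ≤ 1}

/-- Choice of the `k` largest values of `f` on `s`. -/
lemma exists_top {n : ℕ} (f : Fin n → ℝ) (k : ℕ) :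
    ∀ (s : Finset (Fin n)), k ≤ s.card →
      ∃ t ⊆ s, t.card = k ∧ ∀ i ∈ t, ∀ j ∈ s, j ∉ t → f j ≤ f i := by
  induction k with
  | zero => intro s _; exact ⟨∅, Finset.empty_subset s, rfl, by simp⟩
  | succ k ih =>
      intro s hk
      obtain ⟨t, hts, htc, htp⟩ := ih s (le_trans (Nat.le_succ k) hk)
      have hne : (s \ t).Nonempty := by
        rw [← Finset.card_pos, Finset.card_sdiff_of_subset hts]; omega
      obtain ⟨i₀, hi₀, hmax⟩ := Finset.exists_max_image (s \ t) f hne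
      have hi₀s : i₀ ∈ s := (Finset.mem_sdiff.mp hi₀).1
      have hi₀t : i₀ ∉ t := (Finset.mem_sdiff.mp hi₀).2
      refine ⟨insert i₀ t, Finset.insert_subset hi₀s hts,
        by rw [Finset.card_insert_of_notMem hi₀t, htc], ?_⟩
      intro i hi j hj hjt
      have hjt' : j ∉ t := fun h => hjt (Finset.mem_insert_of_mem h)
      rcases Finset.mem_insert.mp hi with h | h
      · subst h; exact hmax j (Finset.mem_sdiff.mpr ⟨hj, hjt'⟩)
      · exact htp i h j hj hjt'

lemma sum_sq_eq_norm_sq {n : ℕ} (x : EuclideanSpace ℝ (Fin n)) :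
    ∑ i, (x i) ^ 2 = ‖x‖ ^ 2 := by
  rw [EuclideanSpace.norm_eq, Real.sq_sqrt (by positivity)]
  simp [Real.norm_eq_abs, sq_abs]

lemma norm_le_of_sum_sq {n : ℕ} (x : EuclideanSpace ℝ (Fin n)) (c : ℝ) (hc : 0 ≤ c)
    (h : ∑ i, (x i) ^ 2 ≤ c ^ 2) : ‖x‖ ≤ c := by
  have h2 := sum_sq_eq_norm_sq x
  nlinarith [norm_nonneg x]

lemma zero_mem_conv (n m : ℕ) :
    (0 : EuclideanSpace ℝ (Fin n)) ∈ convexHull ℝ (sparseBall n m) := by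
  refine subset_convexHull ℝ _ ⟨by simp, ?_⟩
  have h : {i : Fin n | (0 : EuclideanSpace ℝ (Fin n)) i ≠ 0} = ∅ := by
    ext i; simp
  rw [h]; simp

lemma smul_conv_mono {n m : ℕ} {a b : ℝ} (ha : 0 ≤ a) (hab : a ≤ b) :
    a • convexHull ℝ (sparseBall n m) ⊆ b • convexHull ℝ (sparseBall n m) := by
  rcases eq_or_lt_of_le (ha.trans hab) with hb | hb
  · have ha0 : a = 0 := le_antisymm (hab.trans hb.symm.le) ha
    rw [← hb, ha0]
  · intro w hw
    obtain ⟨z, hz, rfl⟩ := hw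
    refine ⟨(a / b) • z, ?_, ?_⟩
    · have h01 : 0 ≤ a / b := div_nonneg ha hb.le
      have h11 : a / b ≤ 1 := (div_le_one hb).mpr hab
      have := (convex_convexHull ℝ (sparseBall n m)) (zero_mem_conv n m) hz
        (by linarith : (0:ℝ) ≤ 1 - a / b) h01 (by ring)
      simpa using this
    · show b • ((a / b) • z) = a • z
      rw [smul_smul, mul_div_cancel₀ a hb.ne']

lemma mem_smul_conv {n m : ℕ} (x : EuclideanSpace ℝ (Fin n)) (c : ℝ) (hc : 0 ≤ c)
    (hx : ‖x‖ ≤ c) (hs : {i | x i ≠ 0}.ncard ≤ m) :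
    x ∈ c • convexHull ℝ (sparseBall n m) := by
  rcases eq_or_lt_of_le hc with hc0 | hc0
  · have hx0 : x = 0 := norm_le_zero_iff.mp (by rw [hc0]; exact hx)
    refine ⟨0, zero_mem_conv n m, ?_⟩
    show c • (0 : EuclideanSpace ℝ (Fin n)) = x
    rw [hx0, smul_zero]
  · refine ⟨c⁻¹ • x, subset_convexHull ℝ _ ⟨?_, ?_⟩, ?_⟩
    · rw [norm_smul, Real.norm_eq_abs, abs_of_pos (inv_pos.mpr hc0)]
      rw [inv_mul_le_iff₀ hc0, mul_one]
      exact hx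
    · have h : {i | (c⁻¹ • x) i ≠ 0} = {i | x i ≠ 0} := by
        ext i
        have : (c⁻¹ • x) i = c⁻¹ * x i := rfl
        simp [this, inv_ne_zero hc0.ne']
      rw [h]; exact hs
    · show c • (c⁻¹ • x) = x
      rw [smul_inv_smul₀ hc0.ne']

lemma sum_sq_le_of_bdd {m : ℕ} {n : ℕ} (hm : 1 ≤ m) {t : Finset (Fin n)} (htc : t.card ≤ m)
    {x : Fin n → ℝ} {c : ℝ} (hc : 0 ≤ c) (h : ∀ i ∈ t, Real.sqrt m * |x i| ≤ c) :
    ∑ i ∈ t, (x i) ^ 2 ≤ c ^ 2 := by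
  have hm0 : (0:ℝ) < (m:ℝ) := by exact_mod_cast hm
  have hms : Real.sqrt m * Real.sqrt m = (m:ℝ) := Real.mul_self_sqrt (Nat.cast_nonneg m)
  have hb : ∀ i ∈ t, (x i) ^ 2 ≤ c ^ 2 / m := by
    intro i hi
    rw [le_div_iff₀ hm0]
    have h1 := h i hi
    have h0 : 0 ≤ Real.sqrt m * |x i| := mul_nonneg (Real.sqrt_nonneg _) (abs_nonneg _)
    have h2 : (Real.sqrt m * |x i|) ^ 2 ≤ c ^ 2 := by nlinarith
    have h3 : (Real.sqrt m * |x i|) ^ 2 = x i ^ 2 * (m:ℝ) := by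
      rw [mul_pow, sq_abs, Real.sq_sqrt (Nat.cast_nonneg m)]; ring
    linarith [h3 ▸ h2]
  calc ∑ i ∈ t, (x i) ^ 2 ≤ ∑ _i ∈ t, c ^ 2 / m := Finset.sum_le_sum hb
    _ = t.card * (c ^ 2 / m) := by rw [Finset.sum_const, nsmul_eq_mul]
    _ ≤ m * (c ^ 2 / m) := by
        apply mul_le_mul_of_nonneg_right _ (by positivity)
        exact_mod_cast htc
    _ = c ^ 2 := by field_simp

lemma keyBase {n m : ℕ} (hm : 1 ≤ m) {s : Finset (Fin n)} (hsm : s.card ≤ m)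
    {x : EuclideanSpace ℝ (Fin n)} {c : ℝ} (hc : 0 ≤ c) (hsupp : ∀ i, i ∉ s → x i = 0)
    (hcase : ‖x‖ ≤ c ∨ ∀ i, Real.sqrt m * |x i| ≤ c) :
    x ∈ (c + (∑ i, |x i|) / Real.sqrt m) • convexHull ℝ (sparseBall n m) := by
  have hsm0 : (0:ℝ) < Real.sqrt m := Real.sqrt_pos.mpr (by exact_mod_cast hm)
  have hnorm : ‖x‖ ≤ c := by
    rcases hcase with h | h
    · exact h
    · apply norm_le_of_sum_sq x c hc
      have hsum : ∑ i, (x i) ^ 2 = ∑ i ∈ s, (x i) ^ 2 :=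
        (Finset.sum_subset (Finset.subset_univ s)
          (fun i _ hi => by rw [hsupp i hi]; ring)).symm
      rw [hsum]
      exact sum_sq_le_of_bdd hm hsm hc (fun i _ => h i)
  have hncard : {i | x i ≠ 0}.ncard ≤ m := by
    have hsub : {i | x i ≠ 0} ⊆ (↑s : Set (Fin n)) := by
      intro i hi
      by_contra hns
      exact hi (hsupp i (by simpa using hns))
    calc {i | x i ≠ 0}.ncard ≤ (↑s : Set (Fin n)).ncard :=
          Set.ncard_le_ncard hsub s.finite_toSet
      _ = s.card := Set.ncard_coe_finset s
      _ ≤ m := hsm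
  refine smul_conv_mono hc ?_ (mem_smul_conv x c hc hnorm hncard)
  have : 0 ≤ (∑ i, |x i|) / Real.sqrt m :=
    div_nonneg (Finset.sum_nonneg fun i _ => abs_nonneg _) hsm0.le
  linarith

lemma keyA {n m : ℕ} (hm : 1 ≤ m) :
    ∀ (k : ℕ) (s : Finset (Fin n)) (x : EuclideanSpace ℝ (Fin n)) (c : ℝ),
      s.card ≤ k → 0 ≤ c → (∀ i, i ∉ s → x i = 0) →
      (‖x‖ ≤ c ∨ ∀ i, Real.sqrt m * |x i| ≤ c) →
      x ∈ (c + (∑ i, |x i|) / Real.sqrt m) • convexHull ℝ (sparseBall n m) := by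
  have hsm0 : (0:ℝ) < Real.sqrt m := Real.sqrt_pos.mpr (by exact_mod_cast hm)
  have hms : Real.sqrt m * Real.sqrt m = (m:ℝ) := Real.mul_self_sqrt (Nat.cast_nonneg m)
  intro k
  induction k with
  | zero =>
      intro s x c hcard hc hsupp hcase
      exact keyBase hm (hcard.trans (Nat.zero_le m)) hc hsupp hcase
  | succ k ih =>
      intro s x c hcard hc hsupp hcase
      by_cases hsmall : s.card ≤ m
      · exact keyBase hm hsmall hc hsupp hcase
      push_neg at hsmall
      obtain ⟨t, hts, htc, htp⟩ := exists_top (fun i => |x i|) m s hsmall.le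
      set y : EuclideanSpace ℝ (Fin n) := WithLp.toLp 2 (fun i => if i ∈ t then x i else 0) with hy
      set z : EuclideanSpace ℝ (Fin n) := WithLp.toLp 2 (fun i => if i ∈ t then 0 else x i) with hz
      have hxyz : x = y + z := by
        ext i
        show x i = y i + z i
        by_cases h : i ∈ t <;> simp [hy, hz, h]
      -- the head part y
      have hysum : ∑ i, (y i) ^ 2 = ∑ i ∈ t, (x i) ^ 2 := by
        rw [← Finset.sum_subset (Finset.subset_univ t) (fun i _ hi => by simp [hy, hi])]
        exact Finset.sum_congr rfl (fun i hi => by simp [hy, hi])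
      have hynorm : ‖y‖ ≤ c := by
        apply norm_le_of_sum_sq y c hc
        rw [hysum]
        rcases hcase with h | h
        · calc ∑ i ∈ t, (x i) ^ 2 ≤ ∑ i, (x i) ^ 2 :=
              Finset.sum_le_sum_of_subset_of_nonneg (Finset.subset_univ t)
                (fun i _ _ => sq_nonneg _)
            _ = ‖x‖ ^ 2 := sum_sq_eq_norm_sq x
            _ ≤ c ^ 2 := by nlinarith [norm_nonneg x]
        · exact sum_sq_le_of_bdd hm htc.le hc (fun i _ => h i)
      have hyncard : {i | y i ≠ 0}.ncard ≤ m := by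
        have hsub : {i | y i ≠ 0} ⊆ (↑t : Set (Fin n)) := by
          intro i hi
          by_contra hns
          exact hi (by simp [hy, (by simpa using hns : i ∉ t)])
        calc {i | y i ≠ 0}.ncard ≤ (↑t : Set (Fin n)).ncard :=
              Set.ncard_le_ncard hsub t.finite_toSet
          _ = t.card := Set.ncard_coe_finset t
          _ = m := htc
      have hymem := mem_smul_conv y c hc hynorm hyncard
      -- the tail part z
      set c' : ℝ := (∑ i ∈ t, |x i|) / Real.sqrt m with hc'
      have hc'0 : 0 ≤ c' :=
        div_nonneg (Finset.sum_nonneg fun i _ => abs_nonneg _) hsm0.le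
      have hzsupp : ∀ i, i ∉ s \ t → z i = 0 := by
        intro i hi
        by_cases h : i ∈ t
        · simp [hz, h]
        · have : i ∉ s := fun hs' => hi (Finset.mem_sdiff.mpr ⟨hs', h⟩)
          simp [hz, h, hsupp i this]
      have hzcase : ∀ i, Real.sqrt m * |z i| ≤ c' := by
        intro i
        by_cases h : i ∈ t
        · have : z i = 0 := by simp [hz, h]
          rw [this]; simpa using hc'0
        by_cases hs' : i ∈ s
        · have hle : ∀ j ∈ t, |x i| ≤ |x j| := fun j hj => htp j hj i hs' h
          have hsumle : (m:ℝ) * |x i| ≤ ∑ j ∈ t, |x j| := by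
            calc (m:ℝ) * |x i| = ∑ _j ∈ t, |x i| := by
                  rw [Finset.sum_const, nsmul_eq_mul, htc]
              _ ≤ ∑ j ∈ t, |x j| := Finset.sum_le_sum hle
          have hzz : z i = x i := by simp [hz, h]
          rw [hc', le_div_iff₀ hsm0, hzz]
          calc Real.sqrt m * |x i| * Real.sqrt m
              = Real.sqrt m * Real.sqrt m * |x i| := by ring
            _ = (m:ℝ) * |x i| := by rw [hms]
            _ ≤ ∑ j ∈ t, |x j| := hsumle
        · have : z i = 0 := by simp [hz, h, hsupp i hs']
          rw [this]; simpa using hc'0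
      have hcard' : (s \ t).card ≤ k := by
        rw [Finset.card_sdiff_of_subset hts, htc]
        omega
      have hzmem := ih (s \ t) z c' hcard' hc'0 hzsupp (Or.inr hzcase)
      -- recombine
      have habs : ∀ i, |x i| = |y i| + |z i| := by
        intro i; by_cases h : i ∈ t <;> simp [hy, hz, h]
      have hsy : ∑ i, |y i| = ∑ i ∈ t, |x i| := by
        rw [← Finset.sum_subset (Finset.subset_univ t) (fun i _ hi => by simp [hy, hi])]
        exact Finset.sum_congr rfl (fun i hi => by simp [hy, hi])
      have hcoef : c' + (∑ i, |z i|) / Real.sqrt m = (∑ i, |x i|) / Real.sqrt m := by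
        rw [hc', ← hsy, ← add_div]
        congr 1
        rw [← Finset.sum_add_distrib]
        exact Finset.sum_congr rfl (fun i _ => (habs i).symm)
      have hconv := convex_convexHull ℝ (sparseBall n m)
      have hd0 : 0 ≤ (∑ i, |x i|) / Real.sqrt m :=
        div_nonneg (Finset.sum_nonneg fun i _ => abs_nonneg _) hsm0.le
      have hfin : y + z ∈ (c + (∑ i, |x i|) / Real.sqrt m) • convexHull ℝ (sparseBall n m) := by
        rw [Convex.add_smul hconv hc hd0]
        exact Set.add_mem_add hymem (hcoef ▸ hzmem)
      exact hxyz.symm ▸ hfin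

/-- Lemma `convex_hull`, "furthermore" part: for every `1 ≤ m ≤ n`,
`√m B₁ⁿ ∩ B₂ⁿ ⊆ 2 conv Ũ_m`. -/
theorem stmt17 (n m : ℕ) (hm : 1 ≤ m) (hmn : m ≤ n) :
    (Real.sqrt m • l1Ball n) ∩ closedBall (0 : EuclideanSpace ℝ (Fin n)) 1 ⊆
      (2 : ℝ) • convexHull ℝ (sparseBall n m) := by
  have hsm0 : (0:ℝ) < Real.sqrt m := Real.sqrt_pos.mpr (by exact_mod_cast hm)
  intro x hx
  obtain ⟨hx1, hx2⟩ := hx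
  have hxnorm : ‖x‖ ≤ 1 := by simpa using mem_closedBall_zero_iff.mp hx2
  have hsum : ∑ i, |x i| ≤ Real.sqrt m := by
    obtain ⟨v, hv, rfl⟩ := Set.mem_smul_set.mp hx1
    have hv1 : ∑ i, |v i| ≤ 1 := hv
    calc ∑ i, |(Real.sqrt m • v : EuclideanSpace ℝ (Fin n)) i|
        = ∑ i, Real.sqrt m * |v i| :=
          Finset.sum_congr rfl (fun i _ => by
            show |Real.sqrt m * v i| = _
            rw [abs_mul, abs_of_nonneg hsm0.le])
      _ = Real.sqrt m * ∑ i, |v i| := (Finset.mul_sum _ _ _).symm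
      _ ≤ Real.sqrt m * 1 := mul_le_mul_of_nonneg_left hv1 hsm0.le
      _ = Real.sqrt m := mul_one _
  have key := keyA (n := n) hm n Finset.univ x 1 (Finset.card_fin n).le zero_le_one
    (fun i hi => absurd (Finset.mem_univ i) hi) (Or.inl hxnorm)
  refine smul_conv_mono (by positivity) ?_ key
  have hle : (∑ i, |x i|) / Real.sqrt m ≤ 1 := (div_le_one hsm0).mpr hsum
  linarith
end

section
/- Let 0 < p < 2, δ > 0, 1 ≤ m ≤ n with ⌈m/δ⌉ ≤ n, and set ε = 2(2/p − 1)^{−1/2} δ^{1/p − 1/2}. Then U_{⌈m/δ⌉} is an ε-cover of m^{1/p − 1/2} B_{p,∞}ⁿ ∩ S^{n-1} with respect to the Euclidean metric: for every x in this set there exists z ∈ S^{n-1} with |supp z| ≤ ⌈m/δ⌉ and |x − z| ≤ ε. -/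
open Metric Set
open scoped Pointwise

private lemma stmt18.lemC {b q : ℝ} (hb : 1 ≤ b) (hq : 1 < q) :
    (q - 1) * (b + 1) ^ (-q) ≤ b ^ (1 - q) - (b + 1) ^ (1 - q) := by
  have hb0 : (0:ℝ) < b := lt_of_lt_of_le one_pos hb
  have hb1 : (0:ℝ) < b + 1 := by linarith
  have hbq : (0:ℝ) < b ^ q := Real.rpow_pos_of_pos hb0 q
  have hAq : (0:ℝ) < (b + 1) ^ q := Real.rpow_pos_of_pos hb1 q
  have hob : (0:ℝ) ≤ 1 / b := by positivity
  have h1 : 1 + q * (1 / b) ≤ (1 + 1 / b) ^ q :=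
    one_add_mul_self_le_rpow_one_add (by linarith) hq.le
  have key : b + q ≤ b ^ (1 - q) * (b + 1) ^ q := by
    have e1 : (1:ℝ) + 1 / b = (b + 1) / b := by field_simp
    have e2 : ((b + 1) / b) ^ q = (b + 1) ^ q / b ^ q := Real.div_rpow hb1.le hb0.le q
    have e3 : b ^ (1 - q) = b / b ^ q := by
      rw [Real.rpow_sub hb0, Real.rpow_one]
    calc b + q = b * (1 + q * (1 / b)) := by field_simp
      _ ≤ b * ((1 + 1 / b) ^ q) := by
          exact mul_le_mul_of_nonneg_left h1 hb0.le
      _ = b ^ (1 - q) * (b + 1) ^ q := by rw [e1, e2, e3]; field_simp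
  have e4 : (b + 1) ^ (-q) = 1 / (b + 1) ^ q := by rw [Real.rpow_neg hb1.le]; ring
  have e5 : (b + 1) ^ (1 - q) = (b + 1) / (b + 1) ^ q := by
    rw [Real.rpow_sub hb1, Real.rpow_one]
  rw [e4, e5]
  rw [mul_one_div, div_le_iff₀ hAq, sub_mul, div_mul_cancel₀ _ hAq.ne']
  linarith

private lemma stmt18.lemB (N k : ℕ) (hk : 1 ≤ k) {q : ℝ} (hq : 1 < q) :
    ∑ t ∈ Finset.range N, ((k : ℝ) + 1 + t) ^ (-q) ≤ (k : ℝ) ^ (1 - q) / (q - 1) := by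
  have hq1 : (0:ℝ) < q - 1 := by linarith
  set f : ℕ → ℝ := fun t => ((k : ℝ) + t) ^ (1 - q) / (q - 1) with hf
  have tele : ∑ t ∈ Finset.range N, (f t - f (t + 1)) = f 0 - f N :=
    Finset.sum_range_sub' f N
  have term : ∀ t ∈ Finset.range N, ((k : ℝ) + 1 + t) ^ (-q) ≤ f t - f (t + 1) := by
    intro t _
    have hb : (1:ℝ) ≤ (k : ℝ) + t := by
      have h1 : (1:ℝ) ≤ (k:ℝ) := by exact_mod_cast hk
      have h2 : (0:ℝ) ≤ (t:ℝ) := Nat.cast_nonneg t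
      linarith
    have hC := stmt18.lemC hb hq
    have e : (k : ℝ) + t + 1 = (k : ℝ) + 1 + t := by ring
    rw [hf]
    simp only [Nat.cast_add, Nat.cast_one]
    rw [div_sub_div_same, le_div_iff₀ hq1]
    calc ((k:ℝ) + 1 + t) ^ (-q) * (q - 1) = (q - 1) * (((k:ℝ) + t) + 1) ^ (-q) := by
          rw [e]; ring
      _ ≤ ((k:ℝ) + t) ^ (1 - q) - (((k:ℝ) + t) + 1) ^ (1 - q) := hC
      _ = ((k:ℝ) + t) ^ (1 - q) - ((k:ℝ) + (t + 1)) ^ (1 - q) := by ring_nf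
  calc ∑ t ∈ Finset.range N, ((k : ℝ) + 1 + t) ^ (-q)
      ≤ ∑ t ∈ Finset.range N, (f t - f (t + 1)) := Finset.sum_le_sum term
    _ = f 0 - f N := tele
    _ ≤ f 0 := by
        have : 0 ≤ f N := by
          apply div_nonneg _ hq1.le
          positivity
        linarith
    _ = (k : ℝ) ^ (1 - q) / (q - 1) := by simp [hf]

/-- Lemma `net`: for `0 < p < 2`, `δ > 0` and
`ε = 2(2/p − 1)^{−1/2} δ^{1/p−1/2}`, the set `U_{⌈m/δ⌉}` is an `ε`-cover of
`m^{1/p−1/2}B_{p,∞}ⁿ ∩ S^{n-1}`: every `x` in this set is within distance `ε` of some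
`z ∈ S^{n-1}` with `|supp z| ≤ ⌈m/δ⌉`. -/
theorem stmt18 (n m : ℕ) (p δ : ℝ) (hp0 : 0 < p) (hp2 : p < 2) (hδ : 0 < δ)
    (hm : 1 ≤ m) (hmn : m ≤ n) (hceil : ⌈(m : ℝ) / δ⌉₊ ≤ n)
    (ε : ℝ) (hε : ε = 2 * (2 / p - 1) ^ (-(1 : ℝ) / 2) * δ ^ (1 / p - 1 / 2)) :
    ∀ x ∈ (((m : ℝ) ^ (1 / p - 1 / 2)) • weakLpBall n p) ∩
        sphere (0 : EuclideanSpace ℝ (Fin n)) 1,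
      ∃ z : EuclideanSpace ℝ (Fin n),
        ‖z‖ = 1 ∧ {i | z i ≠ 0}.ncard ≤ ⌈(m : ℝ) / δ⌉₊ ∧ dist x z ≤ ε := by
  intro x hx
  obtain ⟨hx1, hx2⟩ := hx
  have hn : 1 ≤ n := le_trans hm hmn
  have hm1 : (1:ℝ) ≤ (m:ℝ) := by exact_mod_cast hm
  have hm0 : (0:ℝ) < (m:ℝ) := by linarith
  have hqgt : (1:ℝ) < 2 / p := (one_lt_div hp0).mpr hp2
  set q : ℝ := 2 / p with hqdef
  have hq1 : (0:ℝ) < q - 1 := by linarith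
  set k : ℕ := ⌈(m : ℝ) / δ⌉₊ with hk
  have hk1 : 1 ≤ k := Nat.one_le_ceil_iff.mpr (by positivity)
  have hknR : ((m:ℝ) / δ) ≤ (k:ℝ) := Nat.le_ceil _
  have hxnorm : ‖x‖ = 1 := by simpa using hx2
  set c : ℝ := (m:ℝ) ^ (1/p - 1/2) with hc
  have hc0 : (0:ℝ) < c := Real.rpow_pos_of_pos hm0 _
  have hε0 : 0 < ε := by
    rw [hε]
    have h1 : (0:ℝ) < (2/p - 1) ^ (-(1:ℝ)/2) := Real.rpow_pos_of_pos (by linarith) _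
    have h2 : (0:ℝ) < δ ^ (1/p - 1/2) := Real.rpow_pos_of_pos hδ _
    positivity
  -- easy case : ε ≥ 2
  rcases le_or_gt 2 ε with hε2 | hε2
  · refine ⟨EuclideanSpace.single ⟨0, by omega⟩ (1:ℝ), ?_, ?_, ?_⟩
    · simp [EuclideanSpace.norm_single]
    · calc {i | EuclideanSpace.single (⟨0, by omega⟩ : Fin n) (1:ℝ) i ≠ 0}.ncard
          ≤ ({⟨0, by omega⟩} : Set (Fin n)).ncard := by
            apply Set.ncard_le_ncard _ (Set.toFinite _)
            intro i hi
            simp only [Set.mem_setOf_eq, EuclideanSpace.single_apply] at hi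
            by_contra h
            simp only [Set.mem_singleton_iff] at h
            exact hi (if_neg h)
        _ = 1 := Set.ncard_singleton _
        _ ≤ k := hk1
    · calc dist x (EuclideanSpace.single (⟨0, by omega⟩ : Fin n) (1:ℝ))
          ≤ ‖x‖ + ‖EuclideanSpace.single (⟨0, by omega⟩ : Fin n) (1:ℝ)‖ := by
            rw [dist_eq_norm]; exact norm_sub_le _ _
        _ = 2 := by rw [hxnorm, EuclideanSpace.norm_single]; norm_num
        _ ≤ ε := hε2
  -- weak-ℓp bound on x
  have hweak : ∀ t : ℝ, 0 < t → ({i | t ≤ |x i|}.ncard : ℝ) ≤ c ^ p * t ^ (-p) := by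
    obtain ⟨y, hy, hxy⟩ := Set.mem_smul_set.mp hx1
    intro t ht
    have hset : {i | t ≤ |x i|} = {i | t / c ≤ |y i|} := by
      ext i
      simp only [Set.mem_setOf_eq, ← hxy, PiLp.smul_apply, smul_eq_mul, abs_mul,
        abs_of_pos hc0]
      rw [div_le_iff₀' hc0]
    rw [hset]
    refine le_trans (hy (t / c) (by positivity)) (le_of_eq ?_)
    rw [Real.div_rpow ht.le hc0.le, Real.rpow_neg hc0.le]
    field_simp
  -- sorting
  set v : Fin n → ℝ := fun i => |x i| with hv
  set σ : Equiv.Perm (Fin n) := Tuple.sort v with hσ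
  have hmono : Monotone (v ∘ σ) := Tuple.monotone_sort v
  -- rank bound
  have hrank : ∀ j : Fin n, v (σ j) ≤ c * (((n - (j:ℕ) : ℕ)):ℝ) ^ (-(1/p)) := by
    intro j
    have hA1 : (1:ℝ) ≤ ((n - (j:ℕ) : ℕ):ℝ) := by
      have : 1 ≤ n - (j:ℕ) := by omega
      exact_mod_cast this
    have hA0 : (0:ℝ) < ((n - (j:ℕ) : ℕ):ℝ) := by linarith
    rcases eq_or_lt_of_le (abs_nonneg (x (σ j))) with h0 | h0
    · show |x (σ j)| ≤ _
      rw [← h0]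
      positivity
    · set t : ℝ := v (σ j) with htdef
      have ht : 0 < t := h0
      -- counting
      have hsubset : (((Finset.Ici j).map σ.toEmbedding : Finset (Fin n)) : Set (Fin n))
          ⊆ {i | t ≤ |x i|} := by
        intro i hi
        rw [Finset.mem_coe, Finset.mem_map] at hi
        obtain ⟨j', hj', rfl⟩ := hi
        rw [Finset.mem_Ici] at hj'
        exact hmono hj'
      have hcount : ((n - (j:ℕ) : ℕ):ℝ) ≤ ({i | t ≤ |x i|}.ncard : ℝ) := by
        have h1 : ((Finset.Ici j).map σ.toEmbedding).card = n - (j:ℕ) := by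
          rw [Finset.card_map, Fin.card_Ici]
        have h2 := Set.ncard_le_ncard hsubset (Set.toFinite _)
        rw [Set.ncard_coe_finset, h1] at h2
        exact_mod_cast h2
      have h := le_trans hcount (hweak t ht)
      -- algebra
      set A : ℝ := ((n - (j:ℕ) : ℕ):ℝ)
      have htp : (0:ℝ) < t ^ p := Real.rpow_pos_of_pos ht p
      have h2 : t ^ p * A ≤ c ^ p := by
        have e : c ^ p * t ^ (-p) * t ^ p = c ^ p := by
          rw [Real.rpow_neg ht.le]
          field_simp
        calc t ^ p * A ≤ t ^ p * (c ^ p * t ^ (-p)) := by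
              exact mul_le_mul_of_nonneg_left h htp.le
          _ = c ^ p * t ^ (-p) * t ^ p := by ring
          _ = c ^ p := e
      have h3 : t ^ p ≤ c ^ p / A := (le_div_iff₀ hA0).mpr h2
      have h4 : (t ^ p) ^ p⁻¹ ≤ (c ^ p / A) ^ p⁻¹ :=
        Real.rpow_le_rpow htp.le h3 (inv_nonneg.mpr hp0.le)
      have e1 : (t ^ p) ^ p⁻¹ = t := by
        rw [← Real.rpow_mul ht.le, mul_inv_cancel₀ hp0.ne', Real.rpow_one]
      have e2 : (c ^ p / A) ^ p⁻¹ = c * A ^ (-(1/p)) := by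
        rw [Real.div_rpow (Real.rpow_nonneg hc0.le p) hA0.le,
          ← Real.rpow_mul hc0.le, mul_inv_cancel₀ hp0.ne', Real.rpow_one,
          Real.rpow_neg hA0.le, one_div, div_eq_mul_inv]
      rw [e1, e2] at h4
      exact h4
  set a : Fin n := ⟨n - k, by omega⟩ with ha
  set T : Finset (Fin n) := (Finset.Ici a).map σ.toEmbedding with hT
  have hTcard : T.card = k := by
    rw [hT, Finset.card_map, Fin.card_Ici]
    simp only [ha]
    omega
  set w : EuclideanSpace ℝ (Fin n) := WithLp.toLp 2 (fun i => if i ∈ T then x i else 0) with hw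
  -- tail bound
  have htail : ‖x - w‖ ≤ ε / 2 := by
    have hsq : ‖x - w‖ ^ 2 = ∑ i ∈ Tᶜ, v i ^ 2 := by
      rw [EuclideanSpace.norm_eq, Real.sq_sqrt (by positivity)]
      have hterm : ∀ i : Fin n, ‖(x - w) i‖ ^ 2 = if i ∈ T then 0 else v i ^ 2 := by
        intro i
        rw [PiLp.sub_apply, hw]
        by_cases hiT : i ∈ T
        · simp [hiT]
        · simp [hiT, hv, Real.norm_eq_abs, sq_abs]
      calc ∑ i, ‖(x - w) i‖ ^ 2 = ∑ i : Fin n, (if i ∈ T then 0 else v i ^ 2) :=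
            Finset.sum_congr rfl (fun i _ => hterm i)
        _ = ∑ i ∈ Tᶜ, (if i ∈ T then 0 else v i ^ 2)
            + ∑ i ∈ T, (if i ∈ T then 0 else v i ^ 2) := (Finset.sum_compl_add_sum T _).symm
        _ = ∑ i ∈ Tᶜ, v i ^ 2 := by
            rw [Finset.sum_congr rfl (fun i hi => if_neg (Finset.mem_compl.mp hi)),
              Finset.sum_congr rfl (fun i hi => if_pos hi), Finset.sum_const_zero, add_zero]
    have hTc : Tᶜ = (Finset.Iio a).map σ.toEmbedding := by
      ext i
      simp only [hT, Finset.mem_compl, Finset.mem_map_equiv, Finset.mem_Ici, Finset.mem_Iio]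
      exact not_le
    have hsq2 : ‖x - w‖ ^ 2 = ∑ j ∈ Finset.Iio a, v (σ j) ^ 2 := by
      rw [hsq, hTc, Finset.sum_map]
      rfl
    -- bound each term
    have hbound : ∀ j ∈ Finset.Iio a,
        v (σ j) ^ 2 ≤ c ^ 2 * ((n - (j:ℕ) : ℕ):ℝ) ^ (-q) := by
      intro j _
      have hA0 : (0:ℝ) ≤ ((n - (j:ℕ) : ℕ):ℝ) := Nat.cast_nonneg _
      have h1 : v (σ j) ^ 2 ≤ (c * ((n - (j:ℕ) : ℕ):ℝ) ^ (-(1/p))) ^ 2 :=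
        pow_le_pow_left₀ (abs_nonneg _) (hrank j) 2
      refine le_trans h1 (le_of_eq ?_)
      rw [mul_pow]
      congr 1
      rw [← Real.rpow_natCast (((n - (j:ℕ) : ℕ):ℝ) ^ (-(1/p))) 2, ← Real.rpow_mul hA0]
      congr 1
      rw [hqdef]
      push_cast
      ring
    have hchain : ‖x - w‖ ^ 2 ≤ c ^ 2 * ((k:ℝ) ^ (1 - q) / (q - 1)) := by
      rw [hsq2]
      calc ∑ j ∈ Finset.Iio a, v (σ j) ^ 2
          ≤ ∑ j ∈ Finset.Iio a, c ^ 2 * ((n - (j:ℕ) : ℕ):ℝ) ^ (-q) :=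
            Finset.sum_le_sum hbound
        _ = c ^ 2 * ∑ j ∈ Finset.Iio a, ((n - (j:ℕ) : ℕ):ℝ) ^ (-q) := by
            rw [Finset.mul_sum]
        _ = c ^ 2 * ∑ t ∈ Finset.range (n - k), ((n - t : ℕ):ℝ) ^ (-q) := by
            congr 1
            apply Finset.sum_nbij' (fun j : Fin n => (j : ℕ))
              (fun t => (⟨t % n, Nat.mod_lt _ (by omega)⟩ : Fin n))
            · intro j hj
              rw [Finset.mem_Iio] at hj
              rw [Finset.mem_range]
              exact hj
            · intro t ht
              rw [Finset.mem_range] at ht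
              rw [Finset.mem_Iio]
              have htn : t < n := by omega
              rw [Fin.lt_def]
              simp only [Nat.mod_eq_of_lt htn]
              omega
            · intro j hj
              apply Fin.ext
              simp [Nat.mod_eq_of_lt j.isLt]
            · intro t ht
              rw [Finset.mem_range] at ht
              simp [Nat.mod_eq_of_lt (show t < n by omega)]
            · intro j hj
              rfl
        _ = c ^ 2 * ∑ t ∈ Finset.range (n - k), ((k + 1 + t : ℕ):ℝ) ^ (-q) := by
            congr 1
            rw [← Finset.sum_range_reflect]
            apply Finset.sum_congr rfl
            intro t ht
            rw [Finset.mem_range] at ht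
            congr 2
            omega
        _ ≤ c ^ 2 * ((k:ℝ) ^ (1 - q) / (q - 1)) := by
            apply mul_le_mul_of_nonneg_left _ (by positivity)
            have := stmt18.lemB (n - k) k hk1 hqgt
            refine le_trans (le_of_eq ?_) this
            apply Finset.sum_congr rfl
            intro t _
            congr 1
            push_cast
            ring
    -- numerics
    have hc2 : c ^ 2 = (m:ℝ) ^ (q - 1) := by
      rw [hc, ← Real.rpow_natCast ((m:ℝ) ^ (1/p - 1/2)) 2, ← Real.rpow_mul hm0.le]
      congr 1
      rw [hqdef]
      push_cast
      ring
    have hk0 : (0:ℝ) < (k:ℝ) := by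
      have : (0:ℝ) < (1:ℕ) := by norm_num
      calc (0:ℝ) < 1 := one_pos
        _ ≤ (k:ℝ) := by exact_mod_cast hk1
    have hMK : (m:ℝ) ^ (q - 1) * (k:ℝ) ^ (1 - q) ≤ δ ^ (q - 1) := by
      have h1 : (k:ℝ) ^ (1 - q) ≤ ((m:ℝ) / δ) ^ (1 - q) :=
        Real.antitoneOn_rpow_Ioi_of_exponent_nonpos (by linarith)
          (Set.mem_Ioi.mpr (by positivity)) (Set.mem_Ioi.mpr hk0) hknR
      have h2 : (m:ℝ) ^ (q - 1) * ((m:ℝ) / δ) ^ (1 - q) = δ ^ (q - 1) := by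
        rw [Real.div_rpow hm0.le hδ.le]
        rw [show (m:ℝ) ^ (q-1) * ((m:ℝ) ^ (1-q) / δ ^ (1-q))
            = ((m:ℝ) ^ (q-1) * (m:ℝ) ^ (1-q)) / δ ^ (1-q) from by ring]
        rw [← Real.rpow_add hm0]
        norm_num
        rw [← Real.rpow_neg_one (δ ^ (1-q)), ← Real.rpow_mul hδ.le]
        congr 1
        ring
      calc (m:ℝ) ^ (q - 1) * (k:ℝ) ^ (1 - q)
          ≤ (m:ℝ) ^ (q - 1) * ((m:ℝ) / δ) ^ (1 - q) := by
            exact mul_le_mul_of_nonneg_left h1 (Real.rpow_nonneg hm0.le _)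
        _ = δ ^ (q - 1) := h2
    have hnum : c ^ 2 * ((k:ℝ) ^ (1 - q) / (q - 1)) ≤ δ ^ (q - 1) / (q - 1) := by
      calc c ^ 2 * ((k:ℝ) ^ (1 - q) / (q - 1))
          = ((m:ℝ) ^ (q - 1) * (k:ℝ) ^ (1 - q)) / (q - 1) := by rw [hc2]; ring
        _ ≤ δ ^ (q - 1) / (q - 1) := by gcongr
    have hεsq : δ ^ (q - 1) / (q - 1) = (ε / 2) ^ 2 := by
      rw [hε]
      rw [show 2 * (q - 1) ^ (-(1:ℝ)/2) * δ ^ (1/p - 1/2) / 2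
          = (q - 1) ^ (-(1:ℝ)/2) * δ ^ (1/p - 1/2) from by ring]
      rw [mul_pow]
      rw [← Real.rpow_natCast ((q - 1) ^ (-(1:ℝ)/2)) 2, ← Real.rpow_mul hq1.le]
      rw [← Real.rpow_natCast (δ ^ (1/p - 1/2)) 2, ← Real.rpow_mul hδ.le]
      rw [show (-(1:ℝ)/2) * ((2:ℕ):ℝ) = -1 from by push_cast; ring]
      rw [show ((1:ℝ)/p - 1/2) * ((2:ℕ):ℝ) = q - 1 from by rw [hqdef]; push_cast; ring]
      rw [Real.rpow_neg_one]
      ring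
    have hfin : ‖x - w‖ ^ 2 ≤ (ε / 2) ^ 2 := by
      rw [← hεsq]
      exact le_trans hchain hnum
    have hs := Real.sqrt_le_sqrt hfin
    rwa [Real.sqrt_sq (norm_nonneg _), Real.sqrt_sq (by positivity : (0:ℝ) ≤ ε / 2)] at hs
  -- endgame
  have hwpos : 0 < ‖w‖ := by
    have h1 : x - (x - w) = w := by abel
    have h2 : ‖x‖ - ‖x - w‖ ≤ ‖w‖ := by
      have h3 := norm_sub_norm_le x (x - w)
      rw [h1] at h3
      linarith
    rw [hxnorm] at h2
    linarith
  refine ⟨‖w‖⁻¹ • w, ?_, ?_, ?_⟩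
  · rw [norm_smul, norm_inv, norm_norm, inv_mul_cancel₀ hwpos.ne']
  · have hsub : {i | (‖w‖⁻¹ • w) i ≠ 0} ⊆ (T : Set (Fin n)) := by
      intro i hi
      simp only [Set.mem_setOf_eq, PiLp.smul_apply, smul_eq_mul] at hi
      by_contra hiT
      apply hi
      have hwi : w i = 0 := by
        rw [hw]
        exact if_neg (by simpa using hiT)
      rw [hwi, mul_zero]
    calc {i | (‖w‖⁻¹ • w) i ≠ 0}.ncard ≤ (T : Set (Fin n)).ncard :=
          Set.ncard_le_ncard hsub (Set.toFinite _)
      _ = T.card := Set.ncard_coe_finset T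
      _ = k := hTcard
  · have hdwz : dist w (‖w‖⁻¹ • w) ≤ ε / 2 := by
      have e : w - ‖w‖⁻¹ • w = (1 - ‖w‖⁻¹) • w := by
        rw [sub_smul, one_smul]
      rw [dist_eq_norm, e, norm_smul]
      have e3 : (1 - ‖w‖⁻¹) * ‖w‖ = ‖w‖ - 1 := by field_simp
      have e2 : ‖(1 - ‖w‖⁻¹)‖ * ‖w‖ = |‖w‖ - 1| := by
        calc ‖(1 - ‖w‖⁻¹)‖ * ‖w‖ = |1 - ‖w‖⁻¹| * |‖w‖| := by
              rw [Real.norm_eq_abs, abs_of_pos hwpos]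
          _ = |(1 - ‖w‖⁻¹) * ‖w‖| := (abs_mul _ _).symm
          _ = |‖w‖ - 1| := by rw [e3]
      rw [e2]
      rw [← hxnorm]
      calc |‖w‖ - ‖x‖| ≤ ‖w - x‖ := abs_norm_sub_norm_le w x
        _ = ‖x - w‖ := norm_sub_rev w x
        _ ≤ ε / 2 := htail
    calc dist x (‖w‖⁻¹ • w) ≤ dist x w + dist w (‖w‖⁻¹ • w) := dist_triangle _ _ _
      _ ≤ ε / 2 + ε / 2 := by
          rw [dist_eq_norm]
          exact add_le_add htail hdwz
      _ = ε := by ring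
end
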